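/- arXiv:2206.05232 — 6 statements merged into one kernel-verified Lean document; each statement's English description precedes it below -/
import Mathlib

section
/- Let E be a channel on M_s, S a subchannel from M_d to M_s, and R a subchannel from M_s to M_d. If for every unit vector ψ ∈ ℂ^d there exists a scalar c_ψ such that R(E(S(|ψ⟩⟨ψ|))) = c_ψ·|ψ⟩⟨ψ| (where |ψ⟩⟨ψ| denotes the rank-one orthogonal projection onto the span of ψ), then there exists p ∈ [0,1] such that R(E(S(X))) = p·X for all X ∈ M_d. -/
open Matrix Kronecker BigOperators
open scoped ComplexOrder

noncomputable section

/-- `Mat n` is the space of `n × n` complex matrices. -/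
abbrev Mat (n : ℕ) := Matrix (Fin n) (Fin n) ℂ

/-- A subchannel from `M_n` to `M_m`: a map of Kraus form whose Kraus operators satisfy
`∑ Kᴴ K ≤ 1` in the Loewner order. -/
def IsSubchannel {n m : Type} [Fintype n] [DecidableEq n] [Fintype m]
    (Φ : Matrix n n ℂ → Matrix m m ℂ) : Prop :=
  ∃ (k : ℕ) (K : Fin k → Matrix m n ℂ),
    (∀ X, Φ X = ∑ i, K i * X * (K i)ᴴ) ∧ (1 - ∑ i, (K i)ᴴ * K i).PosSemidef

/-- A channel from `M_n` to `M_m`: a map of Kraus form with `∑ Kᴴ K = 1`. -/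
def IsChannel {n m : Type} [Fintype n] [DecidableEq n] [Fintype m]
    (Φ : Matrix n n ℂ → Matrix m m ℂ) : Prop :=
  ∃ (k : ℕ) (K : Fin k → Matrix m n ℂ),
    (∀ X, Φ X = ∑ i, K i * X * (K i)ᴴ) ∧ (∑ i, (K i)ᴴ * K i) = 1

/-- `E` is probabilistically correctable for `ℂ^d`. -/
def ProbCorrectable (d : ℕ) {s : ℕ} (E : Mat s → Mat s) : Prop :=
  ∃ (S : Mat d → Mat s) (R : Mat s → Mat d) (p : ℝ),
    IsSubchannel S ∧ IsSubchannel R ∧ 0 < p ∧ ∀ X, R (E (S X)) = (p : ℂ) • X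

/-- `E` is perfectly correctable for `ℂ^d`. -/
def PerfCorrectable (d : ℕ) {s : ℕ} (E : Mat s → Mat s) : Prop :=
  ∃ (S : Mat d → Mat s) (R : Mat s → Mat d),
    IsSubchannel S ∧ IsSubchannel R ∧ ∀ X, R (E (S X)) = X

/-- The Choi matrix of a map on `M_s`. -/
def choi {s : ℕ} (Φ : Mat s → Mat s) : Matrix (Fin s × Fin s) (Fin s × Fin s) ℂ :=
  ∑ i : Fin s, ∑ j : Fin s, (Φ (Matrix.single i j 1)) ⊗ₖ (Matrix.single i j 1)

/-- `rP d s`: the largest `r` such that every channel on `M_s` with Choi rank at most `r`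
is probabilistically correctable for `ℂ^d`. -/
def rP (d s : ℕ) : ℕ :=
  sSup {r : ℕ | ∀ E : Mat s → Mat s, IsChannel E → (choi E).rank ≤ r → ProbCorrectable d E}

/-- `rP1 d s`: the largest `r` such that every channel on `M_s` with Choi rank at most `r`
is perfectly correctable for `ℂ^d`. -/
def rP1 (d s : ℕ) : ℕ :=
  sSup {r : ℕ | ∀ E : Mat s → Mat s, IsChannel E → (choi E).rank ≤ r → PerfCorrectable d E}

section Aux

variable {n m : Type} [Fintype n] [DecidableEq n] [Fintype m]
variable {Φ : Matrix n n ℂ → Matrix m m ℂ}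

lemma IsChannel.isSubchannel (hΦ : IsChannel Φ) : IsSubchannel Φ := by
  obtain ⟨k, K, hK, hsum⟩ := hΦ
  exact ⟨k, K, hK, by rw [hsum, sub_self]; exact Matrix.PosSemidef.zero⟩

lemma IsSubchannel.exists_linearMap (hΦ : IsSubchannel Φ) :
    ∃ L : Matrix n n ℂ →ₗ[ℂ] Matrix m m ℂ, ∀ X, Φ X = L X := by
  obtain ⟨k, K, hK, -⟩ := hΦ
  refine ⟨{ toFun := Φ, map_add' := ?_, map_smul' := ?_ }, fun X => rfl⟩
  · intro X Y
    simp [hK, Matrix.mul_add, Matrix.add_mul, Finset.sum_add_distrib]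
  · intro a X
    simp only [hK, RingHom.id_apply, Finset.smul_sum, Matrix.mul_smul, Matrix.smul_mul]

lemma IsSubchannel.posSemidef (hΦ : IsSubchannel Φ) {X : Matrix n n ℂ}
    (hX : X.PosSemidef) : (Φ X).PosSemidef := by
  obtain ⟨k, K, hK, -⟩ := hΦ
  rw [hK X]
  exact Finset.sum_induction _ _ (fun a b ha hb => ha.add hb) Matrix.PosSemidef.zero
    (fun i _ => hX.mul_mul_conjTranspose_same (K i))

lemma psd_trace_nonneg {A : Matrix n n ℂ} (hA : A.PosSemidef) : 0 ≤ A.trace := by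
  rw [Matrix.trace]
  apply Finset.sum_nonneg
  intro i _
  have := hA.dotProduct_mulVec_nonneg (Pi.single i 1)
  simpa [dotProduct, Matrix.mulVec, Pi.single_apply, Finset.sum_ite_eq,
    Finset.sum_ite_eq'] using this

open scoped MatrixOrder Matrix.Norms.L2Operator in
lemma psd_trace_mul_nonneg {A B : Matrix n n ℂ} (hA : A.PosSemidef) (hB : B.PosSemidef) :
    0 ≤ (A * B).trace := by
  obtain ⟨C, rfl⟩ := CStarAlgebra.nonneg_iff_eq_star_mul_self.mp hA.nonneg
  rw [Matrix.mul_assoc, Matrix.trace_mul_comm]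
  exact psd_trace_nonneg (hB.mul_mul_conjTranspose_same C)

lemma IsSubchannel.trace_le (hΦ : IsSubchannel Φ) {X : Matrix n n ℂ}
    (hX : X.PosSemidef) : (Φ X).trace ≤ X.trace := by
  obtain ⟨k, K, hK, hsum⟩ := hΦ
  rw [hK X, Matrix.trace_sum]
  have h1 : ∀ i : Fin k, (K i * X * (K i)ᴴ).trace = ((K i)ᴴ * K i * X).trace := by
    intro i; rw [Matrix.trace_mul_cycle]
  rw [Finset.sum_congr rfl (fun i _ => h1 i), ← Matrix.trace_sum, ← Finset.sum_mul]
  have h2 : 0 ≤ ((1 - ∑ i, (K i)ᴴ * K i) * X).trace := psd_trace_mul_nonneg hsum hX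
  rw [Matrix.sub_mul, Matrix.one_mul, Matrix.trace_sub] at h2
  exact sub_nonneg.mp h2

end Aux

section Basis

variable {d : ℕ}

abbrev eb (i : Fin d) : Fin d → ℂ := Pi.single i 1

lemma star_eb (i : Fin d) : star (eb i) = eb i := by
  funext a; simp [eb, Pi.single_apply, apply_ite (star : ℂ → ℂ)]

lemma eb_dot (i j : Fin d) : star (eb i) ⬝ᵥ eb j = if i = j then 1 else 0 := by
  rw [star_eb]
  simp [eb, dotProduct, Pi.single_apply, eq_comm]

lemma ebM (p q r s : Fin d) :
    vecMulVec (eb p) (eb q) r s = (if r = p then (1:ℂ) else 0) * (if s = q then 1 else 0) := by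
  simp [vecMulVec_apply, Pi.single_apply]

lemma psd_vecMulVec (v : Fin d → ℂ) : (vecMulVec v (star v)).PosSemidef := by
  refine Matrix.PosSemidef.of_dotProduct_mulVec_nonneg ?_ ?_
  · funext a b
    simp [Matrix.conjTranspose_apply, vecMulVec_apply, mul_comm]
  · intro x
    have hmv : vecMulVec v (star v) *ᵥ x = (star v ⬝ᵥ x) • v := by
      funext a
      simp only [Matrix.mulVec, vecMulVec_apply, dotProduct, Pi.smul_apply, smul_eq_mul,
        Finset.mul_sum, Finset.sum_mul]
      congr 1; funext b; ring
    rw [hmv]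
    have h1 : star x ⬝ᵥ (star v ⬝ᵥ x) • v = (star v ⬝ᵥ x) * (star x ⬝ᵥ v) := by
      simp [dotProduct_smul, mul_comm]
    rw [h1]
    have hconj : star x ⬝ᵥ v = star (star v ⬝ᵥ x) := by
      simp only [dotProduct, Pi.star_apply, star_sum, star_mul', star_star, RCLike.star_def]
      congr 1; funext a; simp [Complex.conj_conj]; ring
    rw [hconj]
    exact mul_star_self_nonneg _

lemma trace_vecMulVec (v : Fin d → ℂ) : (vecMulVec v (star v)).trace = star v ⬝ᵥ v := by
  simp [Matrix.trace, Matrix.diag, vecMulVec_apply, dotProduct, mul_comm]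

end Basis

/-- Lemma (constant probability): if `R∘E∘S` fixes every pure-state projection up to a scalar,
then `R∘E∘S = p · id` for some `p ∈ [0,1]`. -/
theorem stmt_2 (d s : ℕ)
    (E : Mat s → Mat s) (S : Mat d → Mat s) (R : Mat s → Mat d)
    (hE : IsChannel E) (hS : IsSubchannel S) (hR : IsSubchannel R)
    (h : ∀ ψ : Fin d → ℂ, star ψ ⬝ᵥ ψ = 1 →
      ∃ c : ℂ, R (E (S (vecMulVec ψ (star ψ)))) = c • vecMulVec ψ (star ψ)) :
    ∃ p : ℝ, 0 ≤ p ∧ p ≤ 1 ∧ ∀ X : Mat d, R (E (S X)) = (p : ℂ) • X := by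
  rcases Nat.eq_zero_or_pos d with hd | hd
  · subst hd
    exact ⟨0, le_refl 0, zero_le_one, fun X => funext fun p => p.elim0⟩
  obtain ⟨LS, hLS⟩ := hS.exists_linearMap
  obtain ⟨LE, hLE⟩ := hE.isSubchannel.exists_linearMap
  obtain ⟨LR, hLR⟩ := hR.exists_linearMap
  set L : Mat d →ₗ[ℂ] Mat d := LR ∘ₗ LE ∘ₗ LS with hLdef
  have hL : ∀ X, R (E (S X)) = L X := by
    intro X
    simp [hLdef, hLS X, hLE (LS X), hLR (LE (LS X))]
  have h' : ∀ ψ : Fin d → ℂ, star ψ ⬝ᵥ ψ = 1 →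
      ∃ c : ℂ, L (vecMulVec ψ (star ψ)) = c • vecMulVec ψ (star ψ) := by
    intro ψ hψ
    obtain ⟨c, hc⟩ := h ψ hψ
    exact ⟨c, by rw [← hL]; exact hc⟩
  -- unnormalized version for vectors of norm² = 2
  have hunit2 : ∀ v : Fin d → ℂ, star v ⬝ᵥ v = 2 →
      ∃ c : ℂ, L (vecMulVec v (star v)) = c • vecMulVec v (star v) := by
    intro v hv
    set t : ℂ := Complex.ofReal ((Real.sqrt 2)⁻¹) with ht
    have htt : t * t = 2⁻¹ := by
      have h2 : (Real.sqrt 2)⁻¹ * (Real.sqrt 2)⁻¹ = 2⁻¹ := by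
        rw [← mul_inv, Real.mul_self_sqrt (by norm_num : (0:ℝ) ≤ 2)]
      rw [ht, ← Complex.ofReal_mul, h2]
      push_cast
      ring
    have hstar_t : star t = t := by rw [ht]; exact Complex.conj_ofReal _
    have h1 : star (t • v) ⬝ᵥ (t • v) = 1 := by
      rw [star_smul, smul_dotProduct, dotProduct_smul, hstar_t, hv, smul_eq_mul, smul_eq_mul,
        ← mul_assoc, htt]
      norm_num
    obtain ⟨c, hc⟩ := h' (t • v) h1
    have hvv : vecMulVec (t • v) (star (t • v)) = (2⁻¹ : ℂ) • vecMulVec v (star v) := by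
      rw [star_smul, hstar_t]
      funext p q
      simp only [vecMulVec_apply, Pi.smul_apply, smul_eq_mul, Matrix.smul_apply]
      linear_combination v p * (star v) q * htt
    rw [hvv, _root_.map_smul] at hc
    refine ⟨c, ?_⟩
    have hc' : (2⁻¹:ℂ) • L (vecMulVec v (star v)) = (2⁻¹:ℂ) • (c • vecMulVec v (star v)) := by
      rw [hc, smul_comm]
    exact smul_right_injective (Mat d) (by norm_num : (2⁻¹:ℂ) ≠ 0) hc'
  have key0 : ∀ i : Fin d, ∃ cc : ℂ,
      L (vecMulVec (eb i) (eb i)) = cc • vecMulVec (eb i) (eb i) := by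
    intro i
    have := h' (eb i) (by simp [eb_dot])
    simpa [star_eb] using this
  choose c hc using key0
  have claim : ∀ i j : Fin d, i ≠ j →
      c j = c i ∧ L (vecMulVec (eb i) (eb j)) = c i • vecMulVec (eb i) (eb j) := by
    intro i j hij
    set A := L (vecMulVec (eb i) (eb j)) with hA
    set B := L (vecMulVec (eb j) (eb i)) with hB
    have key : ∀ a : ℂ, star a * a = 1 → ∃ cc : ℂ,
        c i • vecMulVec (eb i) (eb i) + star a • A + a • B + c j • vecMulVec (eb j) (eb j)
          = cc • (vecMulVec (eb i) (eb i) + star a • vecMulVec (eb i) (eb j)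
              + a • vecMulVec (eb j) (eb i) + vecMulVec (eb j) (eb j)) := by
      intro a ha
      have ha' : (starRingEnd ℂ) a * a = 1 := ha
      have hv2 : star (eb i + a • eb j) ⬝ᵥ (eb i + a • eb j) = 2 := by
        simp [star_add, star_smul, add_dotProduct, dotProduct_add, smul_dotProduct,
          dotProduct_smul, eb_dot, hij, Ne.symm hij, Complex.star_def]
        linear_combination ha'
      have hexp : vecMulVec (eb i + a • eb j) (star (eb i + a • eb j))
          = vecMulVec (eb i) (eb i) + star a • vecMulVec (eb i) (eb j)
            + a • vecMulVec (eb j) (eb i) + vecMulVec (eb j) (eb j) := by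
        rw [star_add, star_smul, star_eb, star_eb]
        funext p q
        simp only [vecMulVec_apply, Pi.add_apply, Pi.smul_apply, smul_eq_mul,
          Matrix.add_apply, Matrix.smul_apply, Complex.star_def]
        linear_combination (eb j p * eb j q) * ha'
      obtain ⟨cc, hcc⟩ := hunit2 _ hv2
      rw [hexp] at hcc
      rw [map_add, map_add, map_add, _root_.map_smul, _root_.map_smul, hc i, hc j] at hcc
      exact ⟨cc, hcc⟩
    obtain ⟨c1, h1⟩ := key 1 (by norm_num)
    obtain ⟨c2, h2⟩ := key (-1) (by norm_num)
    obtain ⟨c3, h3⟩ := key Complex.I (by simp [Complex.star_def, Complex.conj_I])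
    obtain ⟨c4, h4⟩ := key (-Complex.I) (by simp [Complex.star_def, Complex.conj_I])
    have entry : ∀ {X Y : Mat d}, X = Y → ∀ p q : Fin d, X p q = Y p q :=
      fun hXY p q => congrFun (congrFun hXY p) q
    have e1ii := entry h1 i i
    have e1jj := entry h1 j j
    have e1ij := entry h1 i j
    have e2ii := entry h2 i i
    have e2jj := entry h2 j j
    have e2ij := entry h2 i j
    have e3ii := entry h3 i i
    have e3ij := entry h3 i j
    have e4ii := entry h4 i i
    have e4ij := entry h4 i j
    simp only [Matrix.add_apply, Matrix.smul_apply, smul_eq_mul, ebM, eq_self_iff_true,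
      if_true, if_neg hij, if_neg (Ne.symm hij), mul_one, mul_zero, zero_mul, one_mul,
      add_zero, zero_add, star_one, star_neg, Complex.star_def, Complex.conj_I]
      at e1ii e1jj e1ij e2ii e2jj e2ij e3ii e3ij e4ii e4ij
    have hc12 : c1 = c2 := by linear_combination -e1ij - e2ij
    have hc1 : c1 = c i := by
      linear_combination (-(1:ℂ)/2) * e1ii + (-(1:ℂ)/2) * e2ii + (1/2 : ℂ) * hc12
    have hcj : c j = c i := by
      linear_combination ((1:ℂ)/2) * e1jj + ((1:ℂ)/2) * e2jj + hc1 - (1/2 : ℂ) * hc12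
    have hc34 : c3 = c4 := by
      linear_combination (-Complex.I) * e3ij + (-Complex.I) * e4ij + (c3 - c4) * Complex.I_mul_I
    have hc3 : c3 = c i := by
      linear_combination (-(1:ℂ)/2) * e3ii + (-(1:ℂ)/2) * e4ii + (1/2 : ℂ) * hc34
    refine ⟨hcj, ?_⟩
    rw [hc1, hcj] at h1
    rw [hc3, hcj] at h3
    funext p q
    have E1 := entry h1 p q
    have E3 := entry h3 p q
    simp only [Matrix.add_apply, Matrix.smul_apply, smul_eq_mul, star_one,
      Complex.star_def, Complex.conj_I] at E1 E3
    show A p q = (c i • vecMulVec (eb i) (eb j)) p q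
    simp only [Matrix.smul_apply, smul_eq_mul]
    linear_combination ((1:ℂ)/2) * E1 + (Complex.I/2) * E3 +
      ((A p q - B p q - c i * vecMulVec (eb i) (eb j) p q + c i * vecMulVec (eb j) (eb i) p q)/2)
        * Complex.I_mul_I
  set i0 : Fin d := ⟨0, hd⟩ with hi0
  have hcall : ∀ i, c i = c i0 := by
    intro i
    by_cases hi : i = i0
    · rw [hi]
    · exact (claim i0 i (fun hh => hi hh.symm)).1
  have hLM : ∀ i j : Fin d, L (vecMulVec (eb i) (eb j)) = c i0 • vecMulVec (eb i) (eb j) := by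
    intro i j
    by_cases hij : i = j
    · subst hij; rw [hc i, hcall i]
    · rw [(claim i j hij).2, hcall i]
  have hLX : ∀ X : Mat d, L X = c i0 • X := by
    intro X
    have hX : X = ∑ i : Fin d, ∑ j : Fin d, X i j • vecMulVec (eb i) (eb j) := by
      funext p q
      simp [Matrix.sum_apply, Matrix.smul_apply, vecMulVec_apply, Pi.single_apply,
        mul_ite, ite_mul, mul_zero, zero_mul, mul_one, Finset.sum_ite_eq,
        Finset.sum_ite_eq']
    calc L X = L (∑ i : Fin d, ∑ j : Fin d, X i j • vecMulVec (eb i) (eb j)) := by rw [← hX]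
      _ = ∑ i : Fin d, ∑ j : Fin d, X i j • L (vecMulVec (eb i) (eb j)) := by
          simp [map_sum, _root_.map_smul]
      _ = ∑ i : Fin d, ∑ j : Fin d, X i j • (c i0 • vecMulVec (eb i) (eb j)) := by
          refine Finset.sum_congr rfl fun i _ => Finset.sum_congr rfl fun j _ => ?_
          rw [hLM]
      _ = c i0 • ∑ i : Fin d, ∑ j : Fin d, X i j • vecMulVec (eb i) (eb j) := by
          rw [Finset.smul_sum]
          refine Finset.sum_congr rfl fun i _ => ?_
          rw [Finset.smul_sum]
          refine Finset.sum_congr rfl fun j _ => ?_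
          rw [smul_comm]
      _ = c i0 • X := by rw [← hX]
  -- positivity and trace bounds
  set P : Mat d := vecMulVec (eb i0) (star (eb i0)) with hP
  have hPpsd : P.PosSemidef := psd_vecMulVec _
  have hLP : L P = c i0 • P := hLX P
  have hcomp : (c i0 • P).PosSemidef := by
    rw [← hLP, ← hL P]
    exact hR.posSemidef (hE.isSubchannel.posSemidef (hS.posSemidef hPpsd))
  have hPtr : P.trace = 1 := by
    rw [hP, trace_vecMulVec]
    simp [eb_dot]
  have htrace : (c i0 • P).trace = c i0 := by
    rw [Matrix.trace_smul, hPtr, smul_eq_mul, mul_one]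
  have hge : 0 ≤ c i0 := by
    rw [← htrace]
    exact psd_trace_nonneg hcomp
  have hle : c i0 ≤ 1 := by
    have htr : (c i0 • P).trace ≤ P.trace := by
      rw [← hLP, ← hL P]
      calc (R (E (S P))).trace
          ≤ (E (S P)).trace := hR.trace_le (hE.isSubchannel.posSemidef (hS.posSemidef hPpsd))
        _ ≤ (S P).trace := hE.isSubchannel.trace_le (hS.posSemidef hPpsd)
        _ ≤ P.trace := hS.trace_le hPpsd
    rw [htrace, hPtr] at htr
    exact htr
  obtain ⟨hre, him⟩ := Complex.le_def.mp hge
  refine ⟨(c i0).re, by simpa using hre, ?_, ?_⟩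
  · have := (Complex.le_def.mp hle).1
    simpa using this
  · intro X
    rw [hL X, hLX X]
    congr 1
    refine (Complex.ext ?_ ?_).symm
    · simp
    · simp [← him]
end
end

section
/- Let E be a channel on M_s and let R be a channel from M_s to M_d. If there exist a subchannel S from M_d to M_s and a real p > 0 such that R(E(S(X))) = p·X for all X ∈ M_d, then there exists an s×d complex matrix S̃ with S̃* S̃ = I_d such that R(E(S̃ X S̃*)) = X for all X ∈ M_d. -/
open Matrix Kronecker BigOperators
open scoped ComplexOrder

noncomputable section

lemma entry_comp {d : ℕ} (A : Mat d) (u v r t : Fin d) :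
    (A * (Matrix.single u v 1 : Mat d) * Aᴴ) r t = A r u * (starRingEnd ℂ) (A t v) := by
  simp [Matrix.mul_apply, Matrix.single, conjTranspose_apply, Finset.mul_sum,
    Finset.sum_mul, ite_and]
  




lemma sum_normSq_eq_zero {ι : Type} [Fintype ι] {x : ι → ℂ}
    (h : ∑ m, x m * (starRingEnd ℂ) (x m) = 0) : ∀ m, x m = 0 := by
  have h' : ∑ m, (Complex.normSq (x m) : ℂ) = 0 := by
    simpa [Complex.mul_conj] using h
  have h'' : ∑ m, Complex.normSq (x m) = 0 := by exact_mod_cast h'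
  intro m
  have := (Finset.sum_eq_zero_iff_of_nonneg (fun i _ => Complex.normSq_nonneg (x i))).mp h'' m (Finset.mem_univ m)
  exact Complex.normSq_eq_zero.mp this

lemma key {ι : Type} [Fintype ι] {d : ℕ} (hd : 0 < d)
    (A : ι → Mat d) (p : ℝ)
    (hA : ∀ X : Mat d, ∑ m, A m * X * (A m)ᴴ = (p:ℂ) • X) :
    ∃ c : ι → ℂ, (∀ m, A m = c m • 1) ∧ ∑ m, ((Complex.normSq (c m) : ℝ) : ℂ) = (p:ℂ) := by
  have z : Fin d := ⟨0, hd⟩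
  have hf : ∀ u v r t : Fin d,
      ∑ m, (A m) r u * (starRingEnd ℂ) ((A m) t v)
        = if r = u then (if t = v then (p:ℂ) else 0) else 0 := by
    intro u v r t
    have := congrFun (congrFun (hA (Matrix.single u v 1)) r) t
    simp only [Matrix.sum_apply, entry_comp, Matrix.smul_apply, smul_eq_mul] at this
    rw [this, Matrix.single]
    clear this hA
    simp only [Matrix.of_apply, ite_and, mul_ite, mul_one, mul_zero]
    split_ifs <;> simp_all
  set c : ι → ℂ := fun m => (A m) z z with hc
  have hoff : ∀ m (r u : Fin d), r ≠ u → (A m) r u = 0 := by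
    intro m r u hru
    refine sum_normSq_eq_zero (x := fun m => (A m) r u) ?_ m
    rw [hf u u r r]
    simp [hru]
  have hdiag : ∀ m (u : Fin d), (A m) u u = c m := by
    intro m u
    have hzero : ∑ m, ((A m) u u - (A m) z z) * (starRingEnd ℂ) ((A m) u u - (A m) z z) = 0 := by
      have expand : ∀ m, ((A m) u u - (A m) z z) * (starRingEnd ℂ) ((A m) u u - (A m) z z)
          = (A m) u u * (starRingEnd ℂ) ((A m) u u)
            - (A m) u u * (starRingEnd ℂ) ((A m) z z)
            - (A m) z z * (starRingEnd ℂ) ((A m) u u)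
            + (A m) z z * (starRingEnd ℂ) ((A m) z z) := by
        intro m; ring_nf; simp [map_sub]; ring
      simp only [expand, Finset.sum_add_distrib, Finset.sum_sub_distrib]
      rw [hf u u u u, hf u z u z, hf z u z u, hf z z z z]
      simp
    have := sum_normSq_eq_zero hzero m
    linear_combination this
  refine ⟨c, ?_, ?_⟩
  · intro m
    ext r u
    by_cases hru : r = u
    · subst hru; simp [Matrix.one_apply, hdiag m r]
    · simp [Matrix.one_apply, hru, hoff m r u hru]
  · have h0 := hf z z z z
    simp only [Complex.mul_conj, eq_self_iff_true, if_true] at h0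
    exact h0

/-- Proposition 2 (B): if the recovery `R` is a channel, then there is an isometric encoding
`X ↦ S̃ X S̃ᴴ` correcting `E` perfectly. -/
theorem stmt_4 (d s : ℕ) (E : Mat s → Mat s) (R : Mat s → Mat d)
    (hE : IsChannel E) (hR : IsChannel R)
    (h : ∃ (S : Mat d → Mat s) (p : ℝ),
      IsSubchannel S ∧ 0 < p ∧ ∀ X : Mat d, R (E (S X)) = (p : ℂ) • X) :
    ∃ St : Matrix (Fin s) (Fin d) ℂ, Stᴴ * St = 1 ∧
      ∀ X : Mat d, R (E (St * X * Stᴴ)) = X := by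
  rcases Nat.eq_zero_or_pos d with hd | hd
  · subst hd
    refine ⟨0, ?_, ?_⟩
    · ext i j; exact absurd i.2 (by omega)
    · intro X; ext i j; exact absurd i.2 (by omega)
  obtain ⟨kE, Ek, hE1, hE2⟩ := hE
  obtain ⟨kR, Rk, hR1, hR2⟩ := hR
  obtain ⟨S, p, ⟨kS, Sk, hS1, -⟩, hp, hcorr⟩ := h
  -- Kraus form of R ∘ E
  set L : Fin kR × Fin kE → Matrix (Fin d) (Fin s) ℂ := fun j => Rk j.1 * Ek j.2 with hL
  have hL1 : ∀ Y : Mat s, R (E Y) = ∑ j, L j * Y * (L j)ᴴ := by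
    intro Y
    rw [hE1, hR1, Fintype.sum_prod_type]
    refine Finset.sum_congr rfl fun a _ => ?_
    rw [Matrix.mul_sum, Matrix.sum_mul]
    refine Finset.sum_congr rfl fun b _ => ?_
    simp [hL, Matrix.conjTranspose_mul, Matrix.mul_assoc]
  have hL2 : ∑ j, (L j)ᴴ * L j = 1 := by
    rw [Fintype.sum_prod_type, Finset.sum_comm]
    rw [← hE2]
    refine Finset.sum_congr rfl fun b _ => ?_
    have heach : ∀ a, (L (a, b))ᴴ * L (a, b) = (Ek b)ᴴ * ((Rk a)ᴴ * Rk a) * Ek b := by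
      intro a; simp [hL, Matrix.conjTranspose_mul, Matrix.mul_assoc]
    rw [Finset.sum_congr rfl fun a _ => heach a]
    rw [← Matrix.sum_mul, ← Matrix.mul_sum, hR2]
    simp
  -- the composed map on codes
  set A : Fin kS × (Fin kR × Fin kE) → Mat d := fun m => L m.2 * Sk m.1 with hA
  have hAcorr : ∀ X : Mat d, ∑ m, A m * X * (A m)ᴴ = (p:ℂ) • X := by
    intro X
    rw [← hcorr X, hS1, hL1, Fintype.sum_prod_type, Finset.sum_comm]
    refine Finset.sum_congr rfl fun j _ => ?_
    rw [Matrix.mul_sum, Matrix.sum_mul]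
    refine Finset.sum_congr rfl fun i _ => ?_
    simp [hA, Matrix.conjTranspose_mul, Matrix.mul_assoc]
  obtain ⟨c, hc1, hc2⟩ := key hd A p hAcorr
  -- find a good Kraus index of S
  have hex : ∃ i : Fin kS, (0:ℝ) < ∑ j, Complex.normSq (c (i, j)) := by
    by_contra hcon
    push_neg at hcon
    have hz : ∀ i : Fin kS, ∑ j, Complex.normSq (c (i, j)) = 0 := fun i =>
      le_antisymm (hcon i) (Finset.sum_nonneg fun j _ => Complex.normSq_nonneg _)
    have hps : ∑ m : Fin kS × (Fin kR × Fin kE), Complex.normSq (c m) = p := by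
      exact_mod_cast hc2
    rw [Fintype.sum_prod_type] at hps
    simp only [hz, Finset.sum_const_zero] at hps
    exact absurd hps.symm (ne_of_gt hp)
  obtain ⟨i0, hg⟩ := hex
  set g : ℝ := ∑ j, Complex.normSq (c (i0, j)) with hgdef
  have hLK : ∀ j, L j * Sk i0 = c (i0, j) • 1 := fun j => hc1 (i0, j)
  -- K = ∑ c • Lᴴ
  have hK : Sk i0 = ∑ j, c (i0, j) • (L j)ᴴ := by
    calc Sk i0 = (∑ j, (L j)ᴴ * L j) * Sk i0 := by rw [hL2, Matrix.one_mul]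
    _ = ∑ j, (L j)ᴴ * (L j * Sk i0) := by rw [Matrix.sum_mul]; simp [Matrix.mul_assoc]
    _ = ∑ j, c (i0, j) • (L j)ᴴ := by
        refine Finset.sum_congr rfl fun j _ => ?_
        rw [hLK j, Matrix.mul_smul, Matrix.mul_one]
  have hKH : (Sk i0)ᴴ = ∑ j, (starRingEnd ℂ) (c (i0, j)) • L j := by
    conv_lhs => rw [hK]
    rw [Matrix.conjTranspose_sum]
    simp [Matrix.conjTranspose_smul]
  have hKK : (Sk i0)ᴴ * Sk i0 = (g : ℂ) • 1 := by
    rw [hKH, Matrix.sum_mul]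
    have heach : ∀ j, ((starRingEnd ℂ) (c (i0, j)) • L j) * Sk i0
        = ((Complex.normSq (c (i0, j)) : ℝ) : ℂ) • (1 : Mat d) := by
      intro j
      rw [Matrix.smul_mul, hLK j, smul_smul, ← Complex.normSq_eq_conj_mul_self]
    rw [Finset.sum_congr rfl fun j _ => heach j, ← Finset.sum_smul]
    congr 1
    rw [hgdef]
    push_cast
    rfl
  -- the isometry
  set r : ℝ := (Real.sqrt g)⁻¹ with hr
  have hr2 : r * r * g = 1 := by
    rw [hr, ← mul_inv]
    rw [Real.mul_self_sqrt (le_of_lt hg)]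
    exact inv_mul_cancel₀ (ne_of_gt hg)
  refine ⟨(r : ℂ) • Sk i0, ?_, ?_⟩
  · rw [Matrix.conjTranspose_smul]
    rw [Matrix.smul_mul, Matrix.mul_smul, hKK, smul_smul, smul_smul]
    have hone : star ((r:ℂ)) * (r:ℂ) * (g:ℂ) = 1 := by
      rw [Complex.star_def, Complex.conj_ofReal]
      norm_cast
    rw [hone, one_smul]
  · intro X
    rw [hL1]
    have hterm : ∀ j, L j * ((r : ℂ) • Sk i0 * X * ((r : ℂ) • Sk i0)ᴴ) * (L j)ᴴ
        = ((r * r * Complex.normSq (c (i0, j)) : ℝ) : ℂ) • X := by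
      intro j
      have e1 : L j * ((r : ℂ) • Sk i0 * X * ((r : ℂ) • Sk i0)ᴴ) * (L j)ᴴ
          = (L j * ((r : ℂ) • Sk i0)) * X * (L j * ((r : ℂ) • Sk i0))ᴴ := by
        simp only [Matrix.conjTranspose_mul, Matrix.mul_assoc]
      rw [e1, Matrix.mul_smul, hLK j]
      rw [smul_smul, Matrix.conjTranspose_smul, Matrix.conjTranspose_one]
      rw [Matrix.smul_mul, Matrix.one_mul, Matrix.mul_smul, Matrix.mul_one, smul_smul]
      congr 1
      rw [Complex.star_def, _root_.map_mul, Complex.conj_ofReal]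
      push_cast
      rw [Complex.normSq_eq_conj_mul_self]
      ring
    rw [Finset.sum_congr rfl fun j _ => hterm j, ← Finset.sum_smul]
    have : ∑ j, ((r * r * Complex.normSq (c (i0, j)) : ℝ) : ℂ) = 1 := by
      have : ∑ j, (r * r * Complex.normSq (c (i0, j)) : ℝ) = 1 := by
        rw [← Finset.mul_sum, ← hgdef, hr2]
      exact_mod_cast this
    rw [this, one_smul]
end
end

section
/- Let 1 ≤ d ≤ s. Then every channel E on M_s that is probabilistically correctable for ℂ^d satisfies rank J(E) ≤ s² − d² + 1, and there exists a channel E on M_s that is probabilistically correctable for ℂ^d with rank J(E) = s² − d² + 1. -/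
open Matrix Kronecker BigOperators
open scoped ComplexOrder

noncomputable section

lemma kraus_std {s : ℕ} (K : Mat s) (i j : Fin s) (a a' : Fin s) :
    (K * Matrix.single i j (1:ℂ) * Kᴴ) a a' = K a i * star (K a' j) := by
  simp [Matrix.mul_apply, Matrix.single, ite_and, Finset.sum_mul, conjTranspose_apply]

def krausMat {s k : ℕ} (K : Fin k → Mat s) : Matrix (Fin s × Fin s) (Fin k) ℂ :=
  Matrix.of fun p t => K t p.1 p.2

lemma choi_eq_kraus {s k : ℕ} (E : Mat s → Mat s) (K : Fin k → Mat s)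
    (hE : ∀ X, E X = ∑ i, K i * X * (K i)ᴴ) :
    choi E = krausMat K * (krausMat K)ᴴ := by
  ext ⟨a,b⟩ ⟨a',b'⟩
  have h1 : ∀ i j : Fin s, (E (Matrix.single i j 1) ⊗ₖ Matrix.single i j (1:ℂ)) (a,b) (a',b')
      = (∑ t, K t a i * star (K t a' j)) * Matrix.single i j (1:ℂ) b b' := by
    intro i j
    rw [kroneckerMap_apply, hE, Matrix.sum_apply]
    congr 1
    exact Finset.sum_congr rfl fun t _ => kraus_std _ _ _ _ _
  have h2 : (krausMat K * (krausMat K)ᴴ) (a,b) (a',b') = ∑ t, K t a b * star (K t a' b') := by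
    simp [krausMat, mul_apply, conjTranspose_apply]
  rw [h2]
  have hstd : ∀ i j : Fin s, Matrix.single i j (1:ℂ) b b' = if i = b ∧ j = b' then 1 else 0 := by
    intro i j; simp [Matrix.single, of_apply]
  simp only [choi, Matrix.sum_apply, h1, hstd, ite_and, mul_ite, mul_one, mul_zero,
    Finset.sum_ite_eq, Finset.sum_ite_eq', Finset.mem_univ, if_true]
  rw [Finset.sum_eq_single b (fun x _ hx => by simp [hx]) (by simp)]
  simp

lemma kraus_entry_rel {d : ℕ} {ι : Type} [Fintype ι] (M : ι → Mat d) (p : ℂ)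
    (h : ∀ X : Mat d, ∑ i, M i * X * (M i)ᴴ = p • X) (a l b m : Fin d) :
    ∑ i, M i a l * star (M i b m)
      = p * ((if a = l then 1 else 0) * if b = m then 1 else 0) := by
  have h' := congrArg (fun N : Mat d => N a b) (h (Matrix.single l m 1))
  simp only [Matrix.sum_apply, kraus_std, Matrix.smul_apply, smul_eq_mul] at h'
  rw [h']
  simp only [Matrix.single, of_apply, ite_and, mul_ite, mul_one, mul_zero]
  split_ifs <;> first | rfl | omega

lemma sum_mul_star_eq_zero {ι : Type} [Fintype ι] (z : ι → ℂ)
    (h : ∑ i, z i * star (z i) = 0) : ∀ i, z i = 0 := by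
  have h2 : ∑ i, (Complex.normSq (z i) : ℝ) = 0 := by
    have : ((∑ i, (Complex.normSq (z i) : ℝ) : ℝ) : ℂ) = 0 := by
      push_cast
      rw [← h]
      exact Finset.sum_congr rfl fun i _ => (Complex.mul_conj (z i)).symm
    exact_mod_cast this
  intro i
  have := (Finset.sum_eq_zero_iff_of_nonneg (fun i _ => Complex.normSq_nonneg (z i))).1 h2 i
    (Finset.mem_univ i)
  exact Complex.normSq_eq_zero.1 this

lemma kraus_scalar {d : ℕ} (hd : 0 < d) {ι : Type} [Fintype ι] (M : ι → Mat d) (p : ℂ)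
    (h : ∀ X : Mat d, ∑ i, M i * X * (M i)ᴴ = p • X) :
    ∀ i, M i = (M i ⟨0, hd⟩ ⟨0, hd⟩) • 1 := by
  have key := kraus_entry_rel M p h
  have offdiag : ∀ i (a l : Fin d), a ≠ l → M i a l = 0 := by
    intro i a l hne
    refine sum_mul_star_eq_zero (fun i => M i a l) ?_ i
    rw [key a l a l]
    simp [hne]
  have diag : ∀ i (a b : Fin d), M i a a = M i b b := by
    intro i a b
    have hz : ∑ i, (M i a a - M i b b) * star (M i a a - M i b b) = 0 := by
      have e1 := key a a a a
      have e2 := key a a b b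
      have e3 := key b b a a
      have e4 := key b b b b
      simp only [if_pos rfl, mul_one, one_mul] at e1 e2 e3 e4
      have expand : ∀ i, (M i a a - M i b b) * star (M i a a - M i b b)
          = M i a a * star (M i a a) - M i a a * star (M i b b)
            - M i b b * star (M i a a) + M i b b * star (M i b b) := by
        intro i; simp only [star_sub]; ring
      rw [Finset.sum_congr rfl fun i _ => expand i]
      rw [Finset.sum_add_distrib, Finset.sum_sub_distrib, Finset.sum_sub_distrib,
        e1, e2, e3, e4]
      ring
    exact sub_eq_zero.1 (sum_mul_star_eq_zero _ hz i)
  intro i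
  ext x y
  by_cases hxy : x = y
  · subst hxy
    rw [diag i x ⟨0, hd⟩]
    simp
  · rw [offdiag i x y hxy]
    simp [Matrix.one_apply, hxy]

lemma kraus_sum_sq {d : ℕ} (hd : 0 < d) {ι : Type} [Fintype ι] (M : ι → Mat d) (p : ℂ)
    (h : ∀ X : Mat d, ∑ i, M i * X * (M i)ᴴ = p • X) :
    ∑ i, M i ⟨0, hd⟩ ⟨0, hd⟩ * star (M i ⟨0, hd⟩ ⟨0, hd⟩) = p := by
  have := kraus_entry_rel M p h ⟨0, hd⟩ ⟨0, hd⟩ ⟨0, hd⟩ ⟨0, hd⟩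
  simpa using this

lemma kraus_comp {n m l : ℕ} {ι κ : Type} [Fintype ι] [Fintype κ]
    (A : ι → Matrix (Fin l) (Fin m) ℂ)
    (B : κ → Matrix (Fin m) (Fin n) ℂ) (X : Matrix (Fin n) (Fin n) ℂ) :
    ∑ i, A i * (∑ j, B j * X * (B j)ᴴ) * (A i)ᴴ
      = ∑ t : ι × κ, (A t.1 * B t.2) * X * (A t.1 * B t.2)ᴴ := by
  rw [Fintype.sum_prod_type]
  refine Finset.sum_congr rfl fun i _ => ?_
  simp only [Matrix.mul_sum, Matrix.sum_mul, conjTranspose_mul]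
  exact Finset.sum_congr rfl fun j _ => by simp only [Matrix.mul_assoc]

def vecE (s : ℕ) : Mat s ≃ₗ[ℂ] (Fin s × Fin s → ℂ) where
  toFun M := fun p => M p.1 p.2
  invFun v := Matrix.of fun a b => v (a, b)
  map_add' := fun _ _ => rfl
  map_smul' := fun _ _ => rfl
  left_inv := fun _ => rfl
  right_inv := fun _ => rfl

/-- the sandwich linear map `T ↦ B * T * C`. -/
def sandwich {s d : ℕ} (B : Matrix (Fin d) (Fin s) ℂ) (C : Matrix (Fin s) (Fin d) ℂ) :
    Mat s →ₗ[ℂ] Mat d where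
  toFun T := B * T * C
  map_add' x y := by simp [Matrix.mul_add, Matrix.add_mul]
  map_smul' c x := by simp [Matrix.mul_smul, Matrix.smul_mul]

lemma finrank_comap_scalar {s d : ℕ} (hd : 0 < d) (L : Mat s →ₗ[ℂ] Mat d)
    (hsurj : Function.Surjective L) :
    Module.finrank ℂ (Submodule.comap L (ℂ ∙ (1 : Mat d))) + (d * d - 1) = s * s := by
  set q := (ℂ ∙ (1 : Mat d)).mkQ
  have hone : (1 : Mat d) ≠ 0 := by
    intro h
    have := congrArg (fun N : Mat d => N ⟨0, hd⟩ ⟨0, hd⟩) h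
    simp at this
  have hker : LinearMap.ker (q ∘ₗ L) = Submodule.comap L (ℂ ∙ (1 : Mat d)) := by
    rw [LinearMap.ker_comp, Submodule.ker_mkQ]
  have hrange : LinearMap.range (q ∘ₗ L) = ⊤ := by
    rw [LinearMap.range_eq_top]
    exact (Submodule.mkQ_surjective _).comp hsurj
  have h1 := LinearMap.finrank_range_add_finrank_ker (q ∘ₗ L)
  rw [hker, hrange] at h1
  have h2 : Module.finrank ℂ (Mat d ⧸ (ℂ ∙ (1 : Mat d))) + 1 = d * d := by
    have := Submodule.finrank_quotient_add_finrank (ℂ ∙ (1 : Mat d))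
    rw [finrank_span_singleton hone] at this
    rw [this]
    simp [Module.finrank_matrix]
  have h3 : Module.finrank ℂ (Mat s) = s * s := by simp [Module.finrank_matrix]
  rw [finrank_top, h3] at h1
  omega

lemma partA {d s : ℕ} (hd : 1 ≤ d) (hds : d ≤ s) (E : Mat s → Mat s)
    (hE : IsChannel E) (hcor : ProbCorrectable d E) :
    (choi E).rank ≤ s ^ 2 - d ^ 2 + 1 := by
  have hd0 : 0 < d := hd
  obtain ⟨k, K, hK, -⟩ := hE
  obtain ⟨S, R, p, ⟨kS, KS, hKS, -⟩, ⟨kR, KR, hKR, -⟩, hp, hcorr⟩ := hcor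
  set M : Fin kR × (Fin k × Fin kS) → Mat d :=
    fun t => KR t.1 * (K t.2.1 * KS t.2.2) with hMdef
  have hcomp : ∀ X : Mat d, ∑ t, M t * X * (M t)ᴴ = (p : ℂ) • X := by
    intro X
    have e0 := hcorr X
    rw [hKS, hK, hKR, kraus_comp K KS X,
      kraus_comp KR (fun u : Fin k × Fin kS => K u.1 * KS u.2) X] at e0
    exact e0
  set z : Fin d := ⟨0, hd0⟩
  set c : Fin kR × (Fin k × Fin kS) → ℂ := fun t => M t z z with hcdef
  have hscal : ∀ t, M t = c t • 1 := kraus_scalar hd0 M _ hcomp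
  have hsum : ∑ t, c t * star (c t) = (p : ℂ) := kraus_sum_sq hd0 M _ hcomp
  have hpne : (p : ℂ) ≠ 0 := by
    simp only [ne_eq, Complex.ofReal_eq_zero]
    exact ne_of_gt hp
  have hex : ∃ t, c t ≠ 0 := by
    by_contra hall
    push_neg at hall
    rw [Finset.sum_eq_zero (fun t _ => by rw [hall t, zero_mul])] at hsum
    exact hpne hsum.symm
  obtain ⟨⟨b, i₀, a⟩, hc₀⟩ := hex
  have key : KR b * (K i₀ * KS a) = c (b, i₀, a) • 1 := hscal (b, i₀, a)
  set c₀ : ℂ := c (b, i₀, a)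
  have hmulZ : ∀ Z : Mat d, KR b * (K i₀ * (KS a * Z)) = c₀ • Z := by
    intro Z
    calc KR b * (K i₀ * (KS a * Z)) = (KR b * (K i₀ * KS a)) * Z := by
          simp only [Matrix.mul_assoc]
      _ = c₀ • Z := by rw [key, Matrix.smul_mul, Matrix.one_mul]
  have hsurj : Function.Surjective (sandwich (KR b) (KS a)) := by
    intro Y
    refine ⟨(c₀⁻¹ * c₀⁻¹) • (K i₀ * (KS a * (Y * (KR b * K i₀)))), ?_⟩
    show KR b * ((c₀⁻¹ * c₀⁻¹) • (K i₀ * (KS a * (Y * (KR b * K i₀))))) * KS a = Y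
    have hZ : Y * (KR b * (K i₀ * KS a)) = c₀ • Y := by
      rw [key, Matrix.mul_smul, Matrix.mul_one]
    calc KR b * ((c₀⁻¹ * c₀⁻¹) • (K i₀ * (KS a * (Y * (KR b * K i₀))))) * KS a
        = (c₀⁻¹ * c₀⁻¹) • (KR b * (K i₀ * (KS a * (Y * (KR b * (K i₀ * KS a)))))) := by
          simp only [Matrix.mul_smul, Matrix.smul_mul, Matrix.mul_assoc]
      _ = (c₀⁻¹ * c₀⁻¹) • (KR b * (K i₀ * (KS a * (c₀ • Y)))) := by rw [hZ]
      _ = (c₀⁻¹ * c₀⁻¹) • (c₀ • (c₀ • Y)) := by rw [hmulZ (c₀ • Y)]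
      _ = Y := by
          rw [smul_smul, smul_smul,
            show c₀⁻¹ * c₀⁻¹ * c₀ * c₀ = 1 by field_simp, one_smul]
  have hdim := finrank_comap_scalar hd0 (sandwich (KR b) (KS a)) hsurj
  set W := Submodule.comap (sandwich (KR b) (KS a)) (ℂ ∙ (1 : Mat d)) with hWdef
  have hmem : ∀ i, K i ∈ W := by
    intro i
    have happ : (sandwich (KR b) (KS a)) (K i) = KR b * K i * KS a := rfl
    rw [Submodule.mem_comap, happ, Submodule.mem_span_singleton]
    refine ⟨c (b, i, a), ?_⟩
    rw [← hscal (b, i, a)]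
    simp only [Matrix.mul_assoc]
    rfl
  rw [choi_eq_kraus E K hK, Matrix.rank_self_mul_conjTranspose,
    Matrix.rank_eq_finrank_span_cols,
    show (krausMat K).col = (krausMat K)ᵀ from rfl]
  have hle : Submodule.span ℂ (Set.range (krausMat K)ᵀ)
      ≤ W.map (vecE s).toLinearMap := by
    rw [Submodule.span_le]
    rintro _ ⟨t, rfl⟩
    exact ⟨K t, hmem t, rfl⟩
  have hmono := Submodule.finrank_mono hle
  have hW : Module.finrank ℂ (W.map (vecE s).toLinearMap) = Module.finrank ℂ W :=
    LinearEquiv.finrank_map_eq _ _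
  have hsq : s ^ 2 = s * s := sq s
  have hdq : d ^ 2 = d * d := sq d
  omega
section PartB

variable (d s : ℕ)

def Vmat : Matrix (Fin s) (Fin d) ℂ := Matrix.of fun a i => if (a:ℕ) = (i:ℕ) then 1 else 0

def epsR : ℝ := if d = s then 1 else Real.sqrt 2⁻¹

def mcount (x : Fin s) : ℕ := if (x:ℕ) < d then s - d else s

def delR (x : Fin s) : ℝ := Real.sqrt ((1 - (epsR d s)^2) / (mcount d s x))

def Bop (p : Fin s × Fin s) : Mat s :=
  if (p.1:ℕ) < d ∧ (p.2:ℕ) < d then 0 else (delR d s p.2 : ℂ) • Matrix.single p.1 p.2 1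

def Kfam : Fin (s*s+1) → Mat s :=
  fun i => if h : (i:ℕ) < s*s then Bop d s (finProdFinEquiv.symm ⟨i, h⟩)
    else (epsR d s : ℂ) • 1

def Echan : Mat s → Mat s := fun X => ∑ i, Kfam d s i * X * (Kfam d s i)ᴴ

lemma epsR_pos : 0 < epsR d s := by
  unfold epsR; split
  · norm_num
  · positivity

lemma epsR_le_one : epsR d s ≤ 1 := by
  unfold epsR; split
  · exact le_refl 1
  · exact Real.sqrt_le_one.mpr (by norm_num)

lemma sum_dite_last {n : ℕ} {α : Type*} [AddCommMonoid α] (g : Fin n → α) (x : α) :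
    ∑ i : Fin (n+1), (if h : (i:ℕ) < n then g ⟨i, h⟩ else x) = (∑ i : Fin n, g i) + x := by
  rw [Fin.sum_univ_castSucc]
  congr 1
  · refine Finset.sum_congr rfl fun i _ => ?_
    rw [dif_pos (by simp)]
    exact congrArg g (Fin.ext (by simp))
  · rw [dif_neg (by simp)]

lemma card_subtype_lt (h : d ≤ s) : Fintype.card {a : Fin s // (a:ℕ) < d} = d :=
  (Fintype.card_congr ⟨fun x => ⟨x.1, x.2⟩, fun y => ⟨⟨y, lt_of_lt_of_le y.2 h⟩, y.2⟩,
    fun x => rfl, fun y => rfl⟩).trans (Fintype.card_fin d)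

lemma card_filter_lt (h : d ≤ s) :
    (Finset.univ.filter (fun a : Fin s => (a:ℕ) < d)).card = d :=
  (Fintype.card_subtype (fun a : Fin s => (a:ℕ) < d)).symm.trans (card_subtype_lt d s h)

lemma stdBasis_conjT {s : ℕ} (a b : Fin s) :
    (Matrix.single a b (1:ℂ))ᴴ = Matrix.single b a 1 := by
  ext x y
  simp [conjTranspose_apply, Matrix.single, and_comm]

lemma hVV (h : d ≤ s) : (Vmat d s)ᴴ * Vmat d s = 1 := by
  ext i j
  simp only [Matrix.mul_apply, conjTranspose_apply, Vmat, Matrix.of_apply]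
  rw [Finset.sum_eq_single (⟨(i:ℕ), lt_of_lt_of_le i.2 h⟩ : Fin s)]
  · by_cases hij : i = j
    · subst hij; simp [Matrix.one_apply]
    · have : ((i:ℕ) : ℕ) ≠ (j:ℕ) := fun hc => hij (Fin.ext hc)
      simp [Matrix.one_apply, hij, this]
  · intro a _ ha
    have : (a:ℕ) ≠ (i:ℕ) := fun hc => ha (Fin.ext hc)
    simp [this]
  · simp

lemma hproj_psd (h : d ≤ s) : (1 - Vmat d s * (Vmat d s)ᴴ).PosSemidef := by
  have hdiag : 1 - Vmat d s * (Vmat d s)ᴴ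
      = Matrix.diagonal (fun a : Fin s => if (a:ℕ) < d then 0 else 1) := by
    ext a b
    simp only [Matrix.sub_apply, Matrix.mul_apply, conjTranspose_apply, Vmat, Matrix.of_apply,
      Matrix.diagonal_apply]
    by_cases hab : a = b
    · subst hab
      by_cases had : (a:ℕ) < d
      · rw [Finset.sum_eq_single (⟨(a:ℕ), had⟩ : Fin d)]
        · simp [Matrix.one_apply, had]
        · intro i _ hi
          have : (a:ℕ) ≠ (i:ℕ) := fun hc => hi (Fin.ext hc.symm)
          simp [this]
        · simp
      · rw [Finset.sum_eq_zero]
        · simp [Matrix.one_apply, had]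
        · intro i _
          have : (a:ℕ) ≠ (i:ℕ) := by omega
          simp [this]
    · have : ∀ i : Fin d, (if (a:ℕ) = (i:ℕ) then (1:ℂ) else 0)
          * star (if (b:ℕ) = (i:ℕ) then (1:ℂ) else 0) = 0 := by
        intro i
        by_cases hai : (a:ℕ) = (i:ℕ)
        · have : (b:ℕ) ≠ (i:ℕ) := fun hc => hab (Fin.ext (hai.trans hc.symm))
          simp [this]
        · simp [hai]
      rw [Finset.sum_congr rfl fun i _ => this i]
      simp [Matrix.one_apply, hab]
  rw [hdiag]
  refine Matrix.posSemidef_diagonal_iff.2 fun i => ?_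
  split_ifs
  · exact le_refl 0
  · exact zero_le_one

lemma hVEV (a b : Fin s) (h : ¬((a:ℕ) < d ∧ (b:ℕ) < d)) :
    (Vmat d s)ᴴ * Matrix.single a b (1:ℂ) * Vmat d s = 0 := by
  ext i j
  have hent : ((Vmat d s)ᴴ * Matrix.single a b (1:ℂ) * Vmat d s) i j
      = star (Vmat d s a i) * Vmat d s b j := by
    simp [Matrix.mul_apply, Matrix.single, ite_and, Finset.sum_mul, conjTranspose_apply]
  rw [hent]
  push_neg at h
  by_cases had : (a:ℕ) < d
  · have hbd := h had
    have : (b:ℕ) ≠ (j:ℕ) := by omega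
    simp [Vmat, this]
  · have : (a:ℕ) ≠ (i:ℕ) := by omega
    simp [Vmat, this]

lemma chanscal (hd : 1 ≤ d) (hds : d ≤ s) (x : Fin s) :
    (mcount d s x : ℝ) * (delR d s x)^2 + (epsR d s)^2 = 1 := by
  have heps1 : epsR d s ≤ 1 := epsR_le_one d s
  have heps0 : 0 < epsR d s := epsR_pos d s
  have hnn : 0 ≤ (1 - epsR d s ^ 2) / (mcount d s x) := by
    apply div_nonneg
    · nlinarith
    · positivity
  rw [delR, Real.sq_sqrt hnn]
  by_cases hds' : d = s
  · have : epsR d s = 1 := by rw [epsR, if_pos hds']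
    rw [this]
    norm_num
  · have hlt : d < s := lt_of_le_of_ne hds hds'
    have hm0 : 0 < (mcount d s x : ℝ) := by
      have : 0 < mcount d s x := by unfold mcount; split <;> omega
      exact_mod_cast this
    have he : epsR d s ^ 2 = 2⁻¹ := by
      rw [epsR, if_neg hds', Real.sq_sqrt (by norm_num)]
    rw [he]
    field_simp
    ring

lemma BopH_mul (p : Fin s × Fin s) :
    (Bop d s p)ᴴ * Bop d s p
      = if ((p.1:ℕ) < d ∧ (p.2:ℕ) < d) then 0
        else ((delR d s p.2 : ℂ))^2 • Matrix.single p.2 p.2 (1:ℂ) := by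
  unfold Bop
  split_ifs with hgood
  · simp
  · rw [Matrix.conjTranspose_smul, stdBasis_conjT, Matrix.smul_mul, Matrix.mul_smul,
      smul_smul, Matrix.single_mul_single_same, mul_one]
    congr 1
    rw [Complex.star_def, Complex.conj_ofReal, sq]

lemma chan_sum (hd : 1 ≤ d) (hds : d ≤ s) :
    ∑ i, (Kfam d s i)ᴴ * Kfam d s i = 1 := by
  have hstep : ∀ i : Fin (s*s+1), (Kfam d s i)ᴴ * Kfam d s i
      = if h : (i:ℕ) < s*s
        then (fun t : Fin (s*s) => ((Bop d s (finProdFinEquiv.symm t))ᴴ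
          * Bop d s (finProdFinEquiv.symm t))) ⟨i, h⟩
        else ((epsR d s : ℂ))^2 • 1 := by
    intro i
    unfold Kfam
    split_ifs with h
    · rfl
    · rw [Matrix.conjTranspose_smul, Matrix.conjTranspose_one, Matrix.smul_mul,
        Matrix.mul_smul, smul_smul, Matrix.one_mul]
      congr 1
      rw [Complex.star_def, Complex.conj_ofReal, sq]
  rw [Finset.sum_congr rfl fun i _ => hstep i,
    sum_dite_last (fun t : Fin (s*s) => (Bop d s (finProdFinEquiv.symm t))ᴴ
      * Bop d s (finProdFinEquiv.symm t)) (((epsR d s : ℂ))^2 • 1),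
    Equiv.sum_comp (finProdFinEquiv.symm) (fun p => (Bop d s p)ᴴ * Bop d s p)]
  have main : ∑ p : Fin s × Fin s, ((Bop d s p)ᴴ * Bop d s p)
      = 1 - ((epsR d s : ℂ))^2 • 1 := by
    rw [Finset.sum_congr rfl fun p _ => BopH_mul d s p]
    ext x y
    rw [Matrix.sum_apply]
    by_cases hxy : x = y
    · subst hxy
      have hinner : ∀ p : Fin s × Fin s,
          (if ((p.1:ℕ) < d ∧ (p.2:ℕ) < d) then (0 : Mat s)
            else ((delR d s p.2 : ℂ))^2 • Matrix.single p.2 p.2 (1:ℂ)) x x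
          = if ((p.1:ℕ) < d ∧ (x:ℕ) < d) ∧ p.2 = x then (0:ℂ)
            else if p.2 = x then ((delR d s x : ℂ))^2 else 0 := by
        intro p
        by_cases hp2 : p.2 = x
        · subst hp2
          split_ifs with h1 h2 h3 <;>
            simp_all [Matrix.single, Matrix.smul_apply]
        · have hz : (Matrix.single p.2 p.2 (1:ℂ)) x x = 0 := by
            simp only [Matrix.single, Matrix.of_apply, ite_eq_right_iff, and_imp]
            intro h1 _; exact absurd h1 hp2
          split_ifs with h1 h2 <;> simp_all [Matrix.smul_apply, hz]
      rw [Finset.sum_congr rfl fun p _ => hinner p, Fintype.sum_prod_type]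
      have hin2 : ∀ a : Fin s, (∑ b : Fin s,
          if (((a:ℕ) < d ∧ (x:ℕ) < d) ∧ b = x) then (0:ℂ)
            else if b = x then ((delR d s x : ℂ))^2 else 0)
          = if ((a:ℕ) < d ∧ (x:ℕ) < d) then 0 else ((delR d s x : ℂ))^2 := by
        intro a
        rw [Finset.sum_eq_single x]
        · split_ifs <;> simp_all
        · intro b _ hb; simp [hb]
        · simp
      rw [Finset.sum_congr rfl fun a _ => hin2 a]
      have hC := congrArg (fun r : ℝ => (r : ℂ)) (chanscal d s hd hds x)
      push_cast at hC
      have hcount : (∑ a : Fin s,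
          if ((a:ℕ) < d ∧ (x:ℕ) < d) then (0:ℂ) else ((delR d s x : ℂ))^2)
          = (mcount d s x : ℂ) * ((delR d s x : ℂ))^2 := by
        by_cases hx : (x:ℕ) < d
        · simp only [hx, and_true]
          rw [Finset.sum_ite, Finset.sum_const, Finset.sum_const, smul_zero, zero_add]
          have h1 := Finset.card_filter_add_card_filter_not
            (s := (Finset.univ : Finset (Fin s))) (p := fun a : Fin s => (a:ℕ) < d)
          rw [card_filter_lt d s hds] at h1
          have h2 : (Finset.univ.filter (fun a : Fin s => ¬ (a:ℕ) < d)).card = s - d := by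
            rw [Finset.card_univ, Fintype.card_fin] at h1; omega
          rw [h2, nsmul_eq_mul]
          simp only [mcount, if_pos hx]
        · simp only [hx, and_false, if_neg not_false]
          rw [Finset.sum_const, Finset.card_univ, Fintype.card_fin, nsmul_eq_mul]
          simp only [mcount, if_neg hx]
      rw [hcount]
      have hR : ((1: Mat s) - ((epsR d s : ℂ))^2 • 1) x x = 1 - ((epsR d s : ℂ))^2 := by
        simp [Matrix.one_apply]
      rw [hR]
      linear_combination hC
    · have : ∀ p : Fin s × Fin s,
          (if ((p.1:ℕ) < d ∧ (p.2:ℕ) < d) then (0 : Mat s)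
            else ((delR d s p.2 : ℂ))^2 • Matrix.single p.2 p.2 (1:ℂ)) x y = 0 := by
        intro p
        split_ifs
        · rfl
        · have hz : (Matrix.single p.2 p.2 (1:ℂ)) x y = 0 := by
            simp only [Matrix.single, Matrix.of_apply, ite_eq_right_iff, and_imp]
            intro h1 h2; exact absurd (h1.symm.trans h2) hxy
          simp [Matrix.smul_apply, hz]
      rw [Finset.sum_congr rfl fun p _ => this p]
      simp [Matrix.one_apply, hxy]
  rw [main]
  simp

lemma VBV (p : Fin s × Fin s) : (Vmat d s)ᴴ * Bop d s p * Vmat d s = 0 := by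
  unfold Bop
  split_ifs with hg
  · simp
  · rw [Matrix.mul_smul, Matrix.smul_mul, hVEV d s p.1 p.2 hg, smul_zero]

lemma correct (hds : d ≤ s) (X : Mat d) :
    (Vmat d s)ᴴ * (Echan d s (Vmat d s * X * (Vmat d s)ᴴ)) * Vmat d s
      = (((epsR d s)^2 : ℝ) : ℂ) • X := by
  unfold Echan
  rw [Matrix.mul_sum, Matrix.sum_mul]
  have hterm : ∀ i : Fin (s*s+1),
      (Vmat d s)ᴴ * (Kfam d s i * (Vmat d s * X * (Vmat d s)ᴴ) * (Kfam d s i)ᴴ) * Vmat d s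
        = ((Vmat d s)ᴴ * Kfam d s i * Vmat d s) * X
          * ((Vmat d s)ᴴ * (Kfam d s i)ᴴ * Vmat d s) := by
    intro i; simp only [Matrix.mul_assoc]
  have hsummand : ∀ i : Fin (s*s+1),
      (Vmat d s)ᴴ * (Kfam d s i * (Vmat d s * X * (Vmat d s)ᴴ) * (Kfam d s i)ᴴ) * Vmat d s
        = if h : (i:ℕ) < s*s then (fun _ : Fin (s*s) => (0 : Mat d)) ⟨i, h⟩
          else ((epsR d s : ℂ) • (1 : Mat d)) * X * ((epsR d s : ℂ) • (1 : Mat d)) := by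
    intro i
    rw [hterm i]
    unfold Kfam
    split_ifs with h
    · rw [VBV, Matrix.zero_mul, Matrix.zero_mul]
    · have h1 : (Vmat d s)ᴴ * ((epsR d s : ℂ) • (1 : Mat s)) * Vmat d s
          = (epsR d s : ℂ) • (1 : Mat d) := by
        rw [Matrix.mul_smul, Matrix.smul_mul, Matrix.mul_one, hVV d s hds]
      have h2 : ((epsR d s : ℂ) • (1 : Mat s))ᴴ = (epsR d s : ℂ) • (1 : Mat s) := by
        rw [Matrix.conjTranspose_smul, Matrix.conjTranspose_one, Complex.star_def,
          Complex.conj_ofReal]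
      rw [h2, h1]
  rw [Finset.sum_congr rfl fun i _ => hsummand i,
    sum_dite_last (fun _ : Fin (s*s) => (0 : Mat d))
      (((epsR d s : ℂ) • (1 : Mat d)) * X * ((epsR d s : ℂ) • (1 : Mat d))),
    Finset.sum_const_zero, zero_add, Matrix.smul_mul, Matrix.mul_smul, Matrix.one_mul,
    Matrix.mul_one, smul_smul]
  congr 1
  push_cast
  rw [sq]

lemma delR_pos_of_bad (hds : d ≤ s) (p : Fin s × Fin s)
    (hbad : ¬((p.1:ℕ) < d ∧ (p.2:ℕ) < d)) : 0 < delR d s p.2 := by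
  have hlt : d < s := by
    push_neg at hbad
    by_cases h1 : (p.1:ℕ) < d
    · exact lt_of_le_of_lt (hbad h1) p.2.2
    · exact lt_of_le_of_lt (not_lt.1 h1) p.1.2
  have hne : d ≠ s := ne_of_lt hlt
  have he : epsR d s ^ 2 = 2⁻¹ := by rw [epsR, if_neg hne, Real.sq_sqrt (by norm_num)]
  have hm : 0 < (mcount d s p.2 : ℝ) := by
    have : 0 < mcount d s p.2 := by unfold mcount; split <;> omega
    exact_mod_cast this
  rw [delR]
  apply Real.sqrt_pos.2
  rw [he]
  apply div_pos (by norm_num) hm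

lemma rank_echan (hd : 1 ≤ d) (hds : d ≤ s) :
    (choi (Echan d s)).rank = s^2 - d^2 + 1 := by
  classical
  have hs0 : 0 < s := lt_of_lt_of_le hd hds
  rw [choi_eq_kraus (Echan d s) (Kfam d s) (fun X => rfl),
    Matrix.rank_self_mul_conjTranspose, Matrix.rank_eq_finrank_span_cols,
    show (krausMat (Kfam d s)).col = (krausMat (Kfam d s))ᵀ from rfl]
  set u : Fin s × Fin s → ℂ := fun r => if r.1 = r.2 then 1 else 0 with hu
  set ev : Fin s × Fin s → (Fin s × Fin s → ℂ) := fun q => fun r => if r = q then 1 else 0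
    with hev
  set F : ({p : Fin s × Fin s // ¬((p.1:ℕ) < d ∧ (p.2:ℕ) < d)} ⊕ Unit)
      → (Fin s × Fin s → ℂ) := Sum.elim (fun q => ev q.1) (fun _ => u) with hF
  have hεne : (epsR d s : ℂ) ≠ 0 := by
    simp only [ne_eq, Complex.ofReal_eq_zero]
    exact ne_of_gt (epsR_pos d s)
  have hcol : ∀ t, (krausMat (Kfam d s))ᵀ t = fun r : Fin s × Fin s => Kfam d s t r.1 r.2 :=
    fun t => rfl
  have hcolB : ∀ (p : Fin s × Fin s), ¬((p.1:ℕ) < d ∧ (p.2:ℕ) < d) →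
      (fun r : Fin s × Fin s => Bop d s p r.1 r.2) = (delR d s p.2 : ℂ) • ev p := by
    intro p hbad
    funext r
    simp only [Bop, if_neg hbad, Pi.smul_apply, hev, smul_eq_mul, Matrix.smul_apply,
      Matrix.single, Matrix.of_apply]
    congr 1
    by_cases hr : r = p
    · subst hr; simp
    · rw [if_neg (fun hc : p.1 = r.1 ∧ p.2 = r.2 =>
        hr (Prod.ext hc.1.symm hc.2.symm)), if_neg hr]
  have hcol1 : (fun r : Fin s × Fin s => ((epsR d s : ℂ) • (1 : Mat s)) r.1 r.2)
      = (epsR d s : ℂ) • u := by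
    funext r
    simp [Matrix.smul_apply, Matrix.one_apply, hu]
  have hspan : Submodule.span ℂ (Set.range (krausMat (Kfam d s))ᵀ)
      = Submodule.span ℂ (Set.range F) := by
    apply le_antisymm
    · rw [Submodule.span_le]
      rintro _ ⟨t, rfl⟩
      rw [hcol]
      by_cases h : (t:ℕ) < s*s
      · have hKt : Kfam d s t = Bop d s (finProdFinEquiv.symm ⟨(t:ℕ), h⟩) := by
          unfold Kfam; rw [dif_pos h]
        rw [hKt]
        set p := finProdFinEquiv.symm ⟨(t:ℕ), h⟩
        by_cases hgood : (p.1:ℕ) < d ∧ (p.2:ℕ) < d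
        · have : Bop d s p = 0 := by unfold Bop; rw [if_pos hgood]
          rw [this]
          exact Submodule.zero_mem _
        · rw [hcolB p hgood]
          exact Submodule.smul_mem _ _
            (Submodule.subset_span ⟨Sum.inl ⟨p, hgood⟩, rfl⟩)
      · have hKt : Kfam d s t = (epsR d s : ℂ) • 1 := by
          unfold Kfam; rw [dif_neg h]
        rw [hKt, hcol1]
        exact Submodule.smul_mem _ _ (Submodule.subset_span ⟨Sum.inr (), rfl⟩)
    · rw [Submodule.span_le]
      rintro _ ⟨i, rfl⟩
      cases i with
      | inl q =>
        set t : Fin (s*s+1) := (finProdFinEquiv q.1).castSucc with ht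
        have h : (t:ℕ) < s*s := by
          rw [ht, Fin.coe_castSucc]
          exact (finProdFinEquiv q.1).2
        have hback : finProdFinEquiv.symm ⟨(t:ℕ), h⟩ = q.1 := by
          have : (⟨(t:ℕ), h⟩ : Fin (s*s)) = finProdFinEquiv q.1 := by
            apply Fin.ext
            show (t:ℕ) = ((finProdFinEquiv q.1 : Fin (s*s)) : ℕ)
            rw [ht, Fin.coe_castSucc]
          rw [this, Equiv.symm_apply_apply]
        have hKt : Kfam d s t = Bop d s q.1 := by
          unfold Kfam; rw [dif_pos h, hback]
        have hcolt : (krausMat (Kfam d s))ᵀ t = (delR d s q.1.2 : ℂ) • ev q.1 := by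
          rw [hcol, hKt, hcolB q.1 q.2]
        have hδ : (delR d s q.1.2 : ℂ) ≠ 0 := by
          simp only [ne_eq, Complex.ofReal_eq_zero]
          exact ne_of_gt (delR_pos_of_bad d s hds q.1 q.2)
        have : F (Sum.inl q) = (delR d s q.1.2 : ℂ)⁻¹ • (krausMat (Kfam d s))ᵀ t := by
          rw [hcolt, smul_smul, inv_mul_cancel₀ hδ, one_smul]
          rfl
        rw [this]
        exact Submodule.smul_mem _ _ (Submodule.subset_span ⟨t, rfl⟩)
      | inr _ =>
        set t : Fin (s*s+1) := Fin.last (s*s) with ht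
        have h : ¬ ((t:ℕ) < s*s) := by simp [ht]
        have hKt : Kfam d s t = (epsR d s : ℂ) • 1 := by
          unfold Kfam; rw [dif_neg h]
        have hcolt : (krausMat (Kfam d s))ᵀ t = (epsR d s : ℂ) • u := by
          rw [hcol, hKt, hcol1]
        have : F (Sum.inr ()) = (epsR d s : ℂ)⁻¹ • (krausMat (Kfam d s))ᵀ t := by
          rw [hcolt, smul_smul, inv_mul_cancel₀ hεne, one_smul]
          rfl
        rw [this]
        exact Submodule.smul_mem _ _ (Submodule.subset_span ⟨t, rfl⟩)
  have hlin : LinearIndependent ℂ F := by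
    rw [Fintype.linearIndependent_iff]
    intro g hg
    have hg' : ∀ r : Fin s × Fin s, (∑ i, g i • F i) r = 0 := fun r => congrFun hg r
    have hg2 : ∀ r : Fin s × Fin s, ∑ i, g i * F i r = 0 := by
      intro r
      have := hg' r
      rwa [Finset.sum_apply] at this
    have h0 : g (Sum.inr ()) = 0 := by
      have h00 := hg2 (⟨0, hs0⟩, ⟨0, hs0⟩)
      rw [Fintype.sum_sum_type, Finset.sum_eq_zero, zero_add] at h00
      · simpa [hF, hu] using h00
      · intro q _
        have hne : ¬ ((⟨0, hs0⟩, ⟨0, hs0⟩) : Fin s × Fin s) = q.1 := by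
          intro hc
          exact q.2 (hc ▸ ⟨hd, hd⟩)
        simp [hF, hev, hne]
    intro i
    cases i with
    | inr x => cases x; exact h0
    | inl q =>
      have hq := hg2 q.1
      rw [Fintype.sum_sum_type] at hq
      have hinr : ∑ x : Unit, g (Sum.inr x) * F (Sum.inr x) q.1 = 0 := by
        simp [h0]
      rw [hinr, add_zero] at hq
      rw [Finset.sum_eq_single q] at hq
      · simpa [hF, hev] using hq
      · intro q' _ hq'
        have hne : ¬ (q.1 = q'.1) := by
          intro hc
          exact hq' (Subtype.ext hc.symm)
        simp [hF, hev, hne]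
      · simp
  rw [hspan, finrank_span_eq_card hlin]
  have e2 : {p : Fin s × Fin s // (p.1:ℕ) < d ∧ (p.2:ℕ) < d}
      ≃ {a : Fin s // (a:ℕ) < d} × {b : Fin s // (b:ℕ) < d} :=
    ⟨fun x => (⟨x.1.1, x.2.1⟩, ⟨x.1.2, x.2.2⟩),
     fun y => ⟨(y.1.1, y.2.1), y.1.2, y.2.2⟩,
     fun x => rfl, fun y => rfl⟩
  have hcard2 : Fintype.card {p : Fin s × Fin s // (p.1:ℕ) < d ∧ (p.2:ℕ) < d} = d * d := by
    rw [Fintype.card_congr e2, Fintype.card_prod, card_subtype_lt d s hds]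
  have hcard : Fintype.card {p : Fin s × Fin s // ¬((p.1:ℕ) < d ∧ (p.2:ℕ) < d)}
      = s*s - d*d := by
    rw [Fintype.card_subtype_compl, hcard2, Fintype.card_prod, Fintype.card_fin]
  rw [Fintype.card_sum, hcard]
  have hdd : d*d ≤ s*s := Nat.mul_le_mul hds hds
  have hsq : s^2 = s*s := sq s
  have hdq : d^2 = d*d := sq d
  simp only [Fintype.card_unit]
  omega

end PartB

/-- Theorem 3 (B): the maximal Choi rank of channels on `M_s` probabilistically correctable
for `ℂ^d` is `s² − d² + 1`. -/
theorem stmt_10 (d s : ℕ) (hd : 1 ≤ d) (hds : d ≤ s) :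
    (∀ E : Mat s → Mat s, IsChannel E → ProbCorrectable d E →
      (choi E).rank ≤ s ^ 2 - d ^ 2 + 1) ∧
    (∃ E : Mat s → Mat s, IsChannel E ∧ ProbCorrectable d E ∧
      (choi E).rank = s ^ 2 - d ^ 2 + 1) := by
  constructor
  · exact fun E hE hc => partA hd hds E hE hc
  · refine ⟨Echan d s, ⟨s*s+1, Kfam d s, fun X => rfl, chan_sum d s hd hds⟩, ?_,
      rank_echan d s hd hds⟩
    refine ⟨fun X => Vmat d s * X * (Vmat d s)ᴴ, fun Y => (Vmat d s)ᴴ * Y * Vmat d s,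
      (epsR d s)^2, ?_, ?_, pow_pos (epsR_pos d s) 2, fun X => correct d s hds X⟩
    · refine ⟨1, fun _ => Vmat d s, fun X => by rw [Fin.sum_univ_one], ?_⟩
      rw [Fin.sum_univ_one, hVV d s hds, sub_self]
      exact Matrix.PosSemidef.zero
    · refine ⟨1, fun _ => (Vmat d s)ᴴ,
        fun Y => by rw [Fin.sum_univ_one, conjTranspose_conjTranspose], ?_⟩
      rw [Fin.sum_univ_one, conjTranspose_conjTranspose]
      exact hproj_psd d s hds
end
end

section
/- Let 2 ≤ d ≤ s. There exists a channel E on M_s admitting a Kraus representation in which every Kraus operator is a diagonal matrix, whose Choi rank equals ⌈s/(d−1)⌉, and which is not probabilistically correctable for ℂ^d. In particular, r(d,s)·(d−1) < s. -/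
open Matrix Kronecker BigOperators
open scoped ComplexOrder

noncomputable section

lemma star_dot {d : ℕ} (x y : Fin d → ℂ) : star (star x ⬝ᵥ y) = star y ⬝ᵥ x := by
  simp [dotProduct, Finset.sum_comm, mul_comm]

lemma mem_span_line {d : ℕ} (x y : Fin d → ℂ)
    (h : ∀ u : Fin d → ℂ, star u ⬝ᵥ x = 0 → star u ⬝ᵥ y = 0) :
    ∃ c : ℂ, y = c • x := by
  by_cases hx : x = 0
  · refine ⟨0, ?_⟩
    have h0 : star y ⬝ᵥ y = 0 := h y (by simp [hx])
    simpa using dotProduct_star_self_eq_zero.mp h0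
  · have hxx : star x ⬝ᵥ x ≠ 0 := fun h0 => hx (dotProduct_star_self_eq_zero.mp h0)
    set c : ℂ := (star x ⬝ᵥ y) / (star x ⬝ᵥ x) with hc
    set u : Fin d → ℂ := y - c • x with hu
    have hsxx : star (star x ⬝ᵥ x) = star x ⬝ᵥ x := by rw [star_dot]
    have hux : star u ⬝ᵥ x = 0 := by
      have : star u = star y - star c • star x := by rw [hu]; rw [star_sub, star_smul]
      rw [this, sub_dotProduct, smul_dotProduct]
      rw [← star_dot x y, hc, star_div₀, hsxx]
      rw [smul_eq_mul]
      field_simp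
      simp
    have huy : star u ⬝ᵥ y = 0 := h u hux
    have huu : star u ⬝ᵥ u = 0 := by
      rw [hu, dotProduct_sub, huy, dotProduct_smul]
      rw [show star (y - c • x) = star u from rfl, hux]
      simp
    have : u = 0 := dotProduct_star_self_eq_zero.mp huu
    exact ⟨c, by rw [← sub_eq_zero]; exact this⟩

lemma scalar_of_forall_eigen {d : ℕ} (hd : 2 ≤ d) (M : Mat d)
    (h : ∀ x : Fin d → ℂ, ∃ c : ℂ, M *ᵥ x = c • x) :
    ∃ c : ℂ, M = c • (1 : Mat d) := by
  have hpos : 0 < d := by omega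
  choose c hcv using h
  -- c at single basis vectors determines columns
  have hcol : ∀ (j : Fin d) (i : Fin d), M i j = if i = j then c (Pi.single j 1) else 0 := by
    intro j i
    have := congrFun (hcv (Pi.single j 1)) i
    rw [Matrix.mulVec_single_one] at this
    simp only [Matrix.col_apply] at this
    rw [this, Pi.smul_apply, Pi.single_apply]
    split_ifs with hij <;> simp
  -- all basis scalars are equal
  have hkey : ∀ i j : Fin d, i ≠ j → c (Pi.single i 1) = c (Pi.single j 1) := by
    intro i j hij
    set x : Fin d → ℂ := (Pi.single i (1:ℂ)) + (Pi.single j (1:ℂ)) with hx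
    have h1 : M *ᵥ x = c x • x := hcv x
    have h2 : M *ᵥ x = c (Pi.single i 1) • (Pi.single i (1:ℂ) : Fin d → ℂ)
        + c (Pi.single j 1) • (Pi.single j (1:ℂ) : Fin d → ℂ) := by
      rw [hx, Matrix.mulVec_add, hcv, hcv]
    have hi := congrFun (h1.symm.trans h2) i
    have hj := congrFun (h1.symm.trans h2) j
    simp [hx, Pi.single_apply, hij, hij.symm] at hi hj
    rw [← hi, ← hj]
  obtain ⟨i0, i1, hne⟩ : ∃ i0 i1 : Fin d, i0 ≠ i1 :=
    ⟨⟨0, by omega⟩, ⟨1, by omega⟩, by simp [Fin.ext_iff]⟩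
  refine ⟨c (Pi.single i0 1), ?_⟩
  ext i j
  rw [hcol j i]
  have : c (Pi.single j 1) = c (Pi.single i0 1) := by
    by_cases hj : j = i0
    · rw [hj]
    · exact hkey j i0 hj
  rw [this]
  simp [Matrix.one_apply]

lemma sum_mulVec' {d : ℕ} {ι : Type} [Fintype ι] (f : ι → Mat d) (u : Fin d → ℂ) :
    (∑ b, f b) *ᵥ u = ∑ b, f b *ᵥ u := by
  ext i
  simp [Matrix.mulVec, dotProduct, Matrix.sum_apply, Finset.sum_mul]
  rw [Finset.sum_comm]

lemma dot_sum' {d : ℕ} {ι : Type} [Fintype ι] (u : Fin d → ℂ) (w : ι → Fin d → ℂ) :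
    u ⬝ᵥ (∑ b, w b) = ∑ b, u ⬝ᵥ w b := by
  simp only [dotProduct, Finset.sum_apply, Finset.mul_sum]
  rw [Finset.sum_comm]

lemma kraus_id_scalar {d : ℕ} {ι : Type} [Fintype ι] (hd : 2 ≤ d) (M : ι → Mat d) (p : ℂ)
    (hp : p ≠ 0) (h : ∀ X : Mat d, ∑ a, M a * X * (M a)ᴴ = p • X) :
    ∃ (a : ι) (c : ℂ), c ≠ 0 ∧ M a = c • (1 : Mat d) := by
  -- each Kraus operator is scalar
  have hscal : ∀ a : ι, ∃ c : ℂ, M a = c • (1 : Mat d) := by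
    intro a
    apply scalar_of_forall_eigen hd
    intro x
    apply mem_span_line x (M a *ᵥ x)
    intro u hux
    set X : Mat d := Matrix.vecMulVec x (star x) with hX
    have hXv : ∀ w : Fin d → ℂ, X *ᵥ w = (star x ⬝ᵥ w) • x := by
      intro w
      funext i
      simp [hX, Matrix.mulVec, Matrix.vecMulVec_apply, dotProduct, Finset.mul_sum,
        mul_comm, mul_left_comm, Finset.sum_mul]
    have hterm : ∀ b : ι, star u ⬝ᵥ ((M b * X * (M b)ᴴ) *ᵥ u)
        = (star u ⬝ᵥ (M b *ᵥ x)) * star (star u ⬝ᵥ (M b *ᵥ x)) := by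
      intro b
      have e1 : (M b * X * (M b)ᴴ) *ᵥ u = M b *ᵥ (X *ᵥ ((M b)ᴴ *ᵥ u)) := by
        rw [Matrix.mulVec_mulVec, Matrix.mulVec_mulVec]
      rw [e1, hXv, Matrix.mulVec_smul, dotProduct_smul]
      have e2 : star x ⬝ᵥ ((M b)ᴴ *ᵥ u) = star (star u ⬝ᵥ (M b *ᵥ x)) := by
        rw [star_dot, Matrix.star_mulVec, Matrix.dotProduct_mulVec]
      rw [e2, smul_eq_mul]
      ring
    have hq : ∑ b : ι, (star u ⬝ᵥ (M b *ᵥ x)) * star (star u ⬝ᵥ (M b *ᵥ x)) = 0 := by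
      have := congrArg (fun Y : Mat d => star u ⬝ᵥ (Y *ᵥ u)) (h X)
      rw [sum_mulVec'] at this
      rw [dot_sum'] at this
      rw [← Finset.sum_congr rfl (fun b _ => (hterm b))]
      rw [this, Matrix.smul_mulVec, hXv, dotProduct_smul, dotProduct_smul, hux]
      simp
    -- sum of normSq = 0
    have hreal : ∑ b : ι, Complex.normSq (star u ⬝ᵥ (M b *ᵥ x)) = 0 := by
      have : ((∑ b : ι, Complex.normSq (star u ⬝ᵥ (M b *ᵥ x)) : ℝ) : ℂ) = 0 := by
        push_cast
        rw [← hq]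
        refine Finset.sum_congr rfl fun b _ => ?_
        rw [← Complex.mul_conj]
        rfl
      exact_mod_cast this
    have hall := (Finset.sum_eq_zero_iff_of_nonneg
      (fun b _ => Complex.normSq_nonneg _)).mp hreal a (Finset.mem_univ a)
    exact Complex.normSq_eq_zero.mp hall
  choose c hc using hscal
  -- some scalar nonzero
  by_contra hcon
  push_neg at hcon
  have hzero : ∀ a : ι, c a = 0 := by
    intro a
    by_contra hca
    exact hcon a (c a) hca (hc a)
  have := h 1
  have h1 : (∑ a : ι, M a * 1 * (M a)ᴴ) = 0 := by
    refine Finset.sum_eq_zero fun a _ => ?_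
    rw [hc a, hzero a]
    simp
  rw [h1] at this
  have := congrFun (congrFun this ⟨0, by omega⟩) ⟨0, by omega⟩
  simp [Matrix.one_apply] at this
  exact hp this.symm

/-- Lemma 3, first part: there is a Schur (diagonal-Kraus) channel on `M_s` of Choi rank
`⌈s/(d−1)⌉` that is not probabilistically correctable for `ℂ^d`; hence `r(d,s)·(d−1) < s`. -/
theorem stmt_12 (d s : ℕ) (hd : 2 ≤ d) (hds : d ≤ s) :
    (∃ E : Mat s → Mat s,
      (∃ (k : ℕ) (K : Fin k → Mat s),
        (∀ X, E X = ∑ i, K i * X * (K i)ᴴ) ∧ (∑ i, (K i)ᴴ * K i) = 1 ∧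
        ∀ i, ∃ v : Fin s → ℂ, K i = Matrix.diagonal v) ∧
      (choi E).rank = (s + d - 2) / (d - 1) ∧
      ¬ ProbCorrectable d E) ∧
    rP d s * (d - 1) < s := by
  set k := d - 1 with hkdef
  have hk0 : 0 < k := by omega
  set m := (s + d - 2) / k with hmdef
  have hub : m * k ≤ s + k - 1 := by
    rw [hmdef]
    have := Nat.div_mul_le_self (s + d - 2) k
    omega
  have hlb : s ≤ m * k := by
    have h1 : (s + d - 2) / k < m + 1 := by omega
    have h2 : s + d - 2 < (m + 1) * k := (Nat.div_lt_iff_lt_mul hk0).mp h1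
    rw [add_mul, one_mul] at h2
    omega
  have hms : 1 ≤ m := by
    rcases Nat.eq_zero_or_pos m with h | h
    · rw [h, zero_mul] at hlb; omega
    · exact h
  -- block map
  have hbval : ∀ i : Fin s, (i : ℕ) / k < m := by
    intro i
    rw [Nat.div_lt_iff_lt_mul hk0]
    exact lt_of_lt_of_le i.2 hlb
  set b : Fin s → Fin m := fun i => ⟨(i : ℕ) / k, hbval i⟩ with hbdef
  -- each block nonempty
  have hblock : ∀ t : Fin m, ∃ i : Fin s, b i = t := by
    intro t
    have h1 : ((t : ℕ) + 1) * k ≤ m * k := Nat.mul_le_mul_right k t.2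
    rw [add_mul, one_mul] at h1
    have hts : (t : ℕ) * k < s := by omega
    refine ⟨⟨(t : ℕ) * k, hts⟩, ?_⟩
    simp only [hbdef]
    ext
    simp [Nat.mul_div_cancel _ hk0]
  -- block size bound
  have hsize : ∀ t : Fin m, Fintype.card {i : Fin s // b i = t} ≤ k := by
    intro t
    have : ∀ x : {i : Fin s // b i = t}, ((x : Fin s) : ℕ) - (t : ℕ) * k < k := by
      rintro ⟨i, hi⟩
      have hv : (i : ℕ) / k = (t : ℕ) := congrArg Fin.val hi
      have h1 : (t : ℕ) * k ≤ (i : ℕ) := by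
        have := Nat.div_mul_le_self (i : ℕ) k
        rw [hv] at this
        exact this
      have h2 : (i : ℕ) < ((t : ℕ) + 1) * k := by
        rw [← Nat.div_lt_iff_lt_mul hk0, hv]
        omega
      rw [add_mul, one_mul] at h2
      simp only
      omega
    have hinj : Function.Injective (fun x : {i : Fin s // b i = t} =>
        (⟨((x : Fin s) : ℕ) - (t : ℕ) * k, this x⟩ : Fin k)) := by
      rintro ⟨i, hi⟩ ⟨j, hj⟩ hij
      have hvi : (i : ℕ) / k = (t : ℕ) := congrArg Fin.val hi
      have hvj : (j : ℕ) / k = (t : ℕ) := congrArg Fin.val hj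
      have h1i : (t : ℕ) * k ≤ (i : ℕ) := by
        have := Nat.div_mul_le_self (i : ℕ) k; rw [hvi] at this; exact this
      have h1j : (t : ℕ) * k ≤ (j : ℕ) := by
        have := Nat.div_mul_le_self (j : ℕ) k; rw [hvj] at this; exact this
      have h2 : (i : ℕ) - (t : ℕ) * k = (j : ℕ) - (t : ℕ) * k := congrArg Fin.val hij
      have h3 : (i : ℕ) = (j : ℕ) := by omega
      exact Subtype.ext (Fin.ext h3)
    simpa using Fintype.card_le_of_injective _ hinj
  -- the channel
  set v : Fin m → Fin s → ℂ := fun t i => if b i = t then 1 else 0 with hvdef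
  set K : Fin m → Mat s := fun t => Matrix.diagonal (v t) with hKdef
  set E : Mat s → Mat s := fun X => ∑ t, K t * X * (K t)ᴴ with hEdef
  have hchan : (∑ t, (K t)ᴴ * K t) = 1 := by
    ext a c
    simp [hKdef, hvdef, Matrix.sum_apply, Matrix.diagonal_conjTranspose, Matrix.diagonal_apply,
      Matrix.mul_apply, Matrix.one_apply, apply_ite, Finset.sum_ite_eq']
  have hEapp : ∀ (X : Mat s) (a a' : Fin s),
      E X a a' = (if b a = b a' then 1 else 0) * X a a' := by
    intro X a a'
    have key : ∀ t : Fin m, (K t * X * (K t)ᴴ) a a' = v t a * X a a' * star (v t a') := by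
      intro t
      rw [hKdef]
      simp [Matrix.mul_apply, Matrix.diagonal_apply, Matrix.conjTranspose_apply,
        Finset.sum_ite_eq, Finset.sum_ite_eq']
    have hEX : E X a a' = ∑ t, (K t * X * (K t)ᴴ) a a' := by
      rw [hEdef]; simp [Matrix.sum_apply]
    rw [hEX, Finset.sum_congr rfl fun t _ => key t]
    have hv : ∀ t i, v t i = if b i = t then 1 else 0 := fun t i => by rw [hvdef]
    simp only [hv, apply_ite, star_one, star_zero, ite_mul, mul_ite, mul_one, mul_zero,
      zero_mul, one_mul, Finset.sum_ite_eq', Finset.mem_univ, if_true]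
    by_cases hba : b a = b a' <;> simp [hba, eq_comm]
  -- the W matrix
  set W : Matrix (Fin m) (Fin s × Fin s) ℂ :=
    Matrix.of (fun t ac => if ac.1 = ac.2 ∧ b ac.1 = t then 1 else 0) with hWdef
  have hchoi : choi E = Wᴴ * W := by
    ext ⟨a, c⟩ ⟨a', c'⟩
    have lhs : choi E (a, c) (a', c')
        = ∑ i : Fin s, ∑ j : Fin s, (E (Matrix.single i j 1)) (a, c).1 (a', c').1
            * (Matrix.single i j 1 : Mat s) (a, c).2 (a', c').2 := by
      simp [choi, Matrix.sum_apply, Matrix.kroneckerMap_apply]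
    rw [lhs]
    simp only [hEapp]
    rw [Matrix.mul_apply]
    simp only [Matrix.conjTranspose_apply, hWdef, Matrix.of_apply, Matrix.single,
      Matrix.of_apply, apply_ite, star_one, star_zero, ite_mul, mul_ite, mul_one, mul_zero,
      zero_mul, one_mul]
    by_cases hac : a = c <;> by_cases hac' : a' = c' <;>
      by_cases hbb : b a = b a' <;>
      simp [hac, hac', hbb, ite_and, Finset.sum_ite_eq, Finset.sum_ite_eq'] <;>
      (try intro h1) <;> (try subst h1) <;> (try intro h2) <;> (try subst h2) <;>
      first
        | rfl
        | exact fun hx => hac rfl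
        | exact hac rfl
        | exact hac' rfl
        | exact hbb rfl
        | tauto
  -- Gram matrix of W
  set nt : Fin m → ℂ := fun t => ((Finset.univ.filter (fun i : Fin s => b i = t)).card : ℂ)
    with hntdef
  have hWWH : W * Wᴴ = Matrix.diagonal nt := by
    ext t t'
    rw [Matrix.mul_apply]
    rw [Fintype.sum_prod_type]
    simp only [hWdef, Matrix.conjTranspose_apply, Matrix.of_apply, apply_ite, star_one,
      star_zero, ite_mul, mul_ite, mul_one, mul_zero, zero_mul, one_mul, ite_and]
    by_cases htt : t = t'
    · subst htt
      rw [Matrix.diagonal_apply_eq]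
      rw [hntdef]
      simp only
      rw [Finset.card_filter]
      push_cast
      exact Finset.sum_congr rfl (fun a _ => by
        by_cases hba : b a = t <;> simp [hba, Finset.sum_ite_eq])
    · rw [Matrix.diagonal_apply_ne _ htt]
      apply Finset.sum_eq_zero
      intro a _
      apply Finset.sum_eq_zero
      intro c _
      by_cases h1 : a = c
      · subst h1
        by_cases h2 : b a = t
        · by_cases h3 : b a = t'
          · exact absurd ((Eq.symm h2).trans h3) htt
          · simp [h2, h3]
            exact htt
        · simp [h2]
      · simp [h1]
  have hnt0 : ∀ t, nt t ≠ 0 := by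
    intro t
    obtain ⟨i, hi⟩ := hblock t
    rw [hntdef]
    simp only [Nat.cast_ne_zero]
    exact Finset.card_ne_zero_of_mem (Finset.mem_filter.mpr ⟨Finset.mem_univ i, hi⟩)
  have hrank : (choi E).rank = m := by
    rw [hchoi, Matrix.rank_conjTranspose_mul_self]
    apply le_antisymm
    · simpa using W.rank_le_card_height
    · have h1 : (W * Wᴴ).rank = m := by
        rw [hWWH, Matrix.rank_diagonal]
        have hc : Fintype.card {t : Fin m // nt t ≠ 0} = Fintype.card (Fin m) :=
          Fintype.card_congr (Equiv.subtypeUnivEquiv hnt0)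
        rw [hc, Fintype.card_fin]
      calc m = (W * Wᴴ).rank := h1.symm
        _ ≤ W.rank := Matrix.rank_mul_le_left W Wᴴ
  -- not probabilistically correctable
  have hnc : ¬ ProbCorrectable d E := by
    rintro ⟨S, R, p, ⟨nS, A, hA, -⟩, ⟨nR, B, hB, -⟩, hp, hcor⟩
    have hp' : (p : ℂ) ≠ 0 := by
      simp only [ne_eq, Complex.ofReal_eq_zero]
      exact ne_of_gt hp
    have key : ∀ X : Mat d, ∑ z : Fin nR × Fin m × Fin nS,
        (B z.1 * K z.2.1 * A z.2.2) * X * (B z.1 * K z.2.1 * A z.2.2)ᴴ = (p : ℂ) • X := by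
      intro X
      have h0 : R (E (S X)) = (p : ℂ) • X := hcor X
      have e1 : E (S X) = ∑ t, ∑ j, (K t * A j) * X * (K t * A j)ᴴ := by
        rw [hA]
        rw [show E (∑ j, A j * X * (A j)ᴴ) = ∑ t, K t * (∑ j, A j * X * (A j)ᴴ) * (K t)ᴴ from by
          rw [hEdef]]
        refine Finset.sum_congr rfl fun t _ => ?_
        rw [Finset.mul_sum, Finset.sum_mul]
        refine Finset.sum_congr rfl fun j _ => ?_
        simp only [Matrix.conjTranspose_mul, Matrix.mul_assoc]
      rw [e1, hB] at h0
      rw [← h0]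
      rw [Fintype.sum_prod_type]
      refine Finset.sum_congr rfl fun r _ => ?_
      rw [Fintype.sum_prod_type, Matrix.mul_sum, Matrix.sum_mul]
      refine Finset.sum_congr rfl fun t _ => ?_
      rw [Matrix.mul_sum, Matrix.sum_mul]
      refine Finset.sum_congr rfl fun j _ => ?_
      dsimp only
      simp only [Matrix.conjTranspose_mul, Matrix.mul_assoc]
    obtain ⟨⟨r, t, j⟩, c, hc0, hM⟩ := kraus_id_scalar hd _ ((p : ℂ)) hp' key
    -- rank contradiction
    have hrank1 : ((c • (1 : Mat d))).rank = d := by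
      have hu : IsUnit (c • (1 : Mat d)) := by
        refine isUnit_iff_exists.mpr ⟨c⁻¹ • 1, ?_, ?_⟩ <;>
          simp [smul_smul, mul_inv_cancel₀ hc0, inv_mul_cancel₀ hc0]
      rw [Matrix.rank_of_isUnit _ hu, Fintype.card_fin]
    have hrank2 : ((B r * K t * A j)).rank ≤ k := by
      calc (B r * K t * A j).rank ≤ (B r * K t).rank := Matrix.rank_mul_le_left _ _
        _ ≤ (K t).rank := Matrix.rank_mul_le_right _ _
        _ ≤ k := by
            rw [hKdef]
            simp only
            rw [Matrix.rank_diagonal]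
            refine le_trans (le_of_eq (Fintype.card_congr (Equiv.subtypeEquivRight ?_))) (hsize t)
            intro i
            rw [hvdef]
            simp only [ne_eq, ite_eq_right_iff, one_ne_zero, imp_false, not_not]
      -- note: orientation of subtype equiv
    rw [← hM] at hrank1
    have : (d : ℕ) ≤ k := hrank1 ▸ hrank2
    omega
  refine ⟨⟨E, ⟨m, K, fun X => rfl, hchan, fun t => ⟨v t, by rw [hKdef]⟩⟩, hrank, hnc⟩, ?_⟩
  have hupper : rP d s ≤ m - 1 := by
    apply csSup_le'
    intro r hr
    by_contra hcontra
    push_neg at hcontra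
    have hm_le : m ≤ r := by omega
    exact hnc (hr E ⟨m, K, fun X => rfl, hchan⟩ (le_trans (le_of_eq hrank) hm_le))
  have hmul : rP d s * k ≤ (m - 1) * k := Nat.mul_le_mul_right k hupper
  have h2 : (m - 1) * k = m * k - k := by rw [Nat.sub_mul, one_mul]
  omega
end
end

section
/- Let 1 ≤ d ≤ s and let E be a channel on M_s admitting a Kraus representation in which every Kraus operator is a diagonal matrix. If rank J(E) · (d − 1) < s, then E is probabilistically correctable for ℂ^d. -/
open Matrix Kronecker BigOperators
open scoped ComplexOrder

noncomputable section

section Aux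


lemma auxA {s k : ℕ} (u : Fin s → (Fin k → ℂ)) (T : Finset (Fin s)) (hT : T.Nonempty) :
    ∃ B : Finset (Fin s), B ⊆ T ∧ B.card ≤ Module.finrank ℂ (Submodule.span ℂ (u '' ↑T)) ∧
      ∀ a ∈ T, u a ∈ Submodule.span ℂ (u '' ↑B) := by
  classical
  obtain ⟨b, hb_sub, hb_span, hb_ind⟩ := exists_linearIndependent ℂ (u '' ↑T)
  have hbfin : b.Finite := (T.finite_toSet.image u).subset hb_sub
  haveI : Fintype b := hbfin.fintype
  obtain ⟨a0, ha0⟩ := hT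
  set g : (Fin k → ℂ) → Fin s := fun x => if h : ∃ a ∈ T, u a = x then h.choose else a0 with hg
  have hgood : ∀ x ∈ b, g x ∈ T ∧ u (g x) = x := by
    intro x hx
    have hex : ∃ a ∈ T, u a = x := by
      obtain ⟨a, haT, rfl⟩ := hb_sub hx
      exact ⟨a, haT, rfl⟩
    simp only [g, dif_pos hex]
    exact ⟨hex.choose_spec.1, hex.choose_spec.2⟩
  set B : Finset (Fin s) := b.toFinset.image g with hB
  have hbB : b ⊆ u '' ↑B := by
    intro x hx
    refine ⟨g x, ?_, (hgood x hx).2⟩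
    simp only [B, Finset.coe_image, Set.mem_image, Finset.mem_coe, Set.mem_toFinset]
    exact ⟨x, by simpa using hx, rfl⟩
  refine ⟨B, ?_, ?_, ?_⟩
  · intro a ha
    simp only [B, Finset.mem_image, Set.mem_toFinset] at ha
    obtain ⟨x, hx, rfl⟩ := ha
    exact (hgood x hx).1
  · calc B.card ≤ b.toFinset.card := Finset.card_image_le
      _ = Module.finrank ℂ (Submodule.span ℂ b) := (finrank_span_set_eq_card hb_ind).symm
      _ = Module.finrank ℂ (Submodule.span ℂ (u '' ↑T)) := by rw [hb_span]
  · intro a ha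
    have h1 : u a ∈ Submodule.span ℂ (u '' (T : Set (Fin s))) :=
      Submodule.subset_span ⟨a, ha, rfl⟩
    rw [← hb_span] at h1
    exact Submodule.span_mono hbB h1

lemma auxGroups {s k : ℕ} (u : Fin s → (Fin k → ℂ)) (hu : ∀ a, u a ≠ 0) (n : ℕ)
    (hn : ∀ T : Finset (Fin s), Module.finrank ℂ (Submodule.span ℂ (u '' ↑T)) ≤ n) :
    ∀ (m : ℕ) (T : Finset (Fin s)), n * m < T.card →
      ∃ c : Fin k → ℂ, c ≠ 0 ∧ ∃ S : Fin (m + 1) → Finset (Fin s),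
        (∀ j, S j ⊆ T) ∧ Pairwise (fun j l => Disjoint (S j) (S l)) ∧
        ∀ j, c ∈ Submodule.span ℂ (u '' ↑(S j)) := by
  intro m
  induction m with
  | zero =>
    intro T hT
    have hT' : 0 < T.card := by simpa using hT
    obtain ⟨a, ha⟩ := Finset.card_pos.mp hT'
    refine ⟨u a, hu a, fun _ => T, fun _ => subset_rfl, ?_, fun _ => Submodule.subset_span ⟨a, ha, rfl⟩⟩
    intro j l hjl
    haveI : Subsingleton (Fin (0 + 1)) := Fin.subsingleton_one
    exact absurd (Subsingleton.elim j l) hjl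
  | succ m ih =>
    intro T hT
    have hTne : T.Nonempty := Finset.card_pos.mp (by omega)
    obtain ⟨B, hBT, hBcard, hBspan⟩ := auxA u T hTne
    have hBn : B.card ≤ n := hBcard.trans (hn T)
    have hmul : n * (m + 1) = n * m + n := by ring
    have hcard' : n * m < (T \ B).card := by
      have hsd := Finset.card_sdiff_of_subset hBT
      omega
    obtain ⟨c, hc, S', hS'T, hS'disj, hS'span⟩ := ih (T \ B) hcard'
    have hspanTB : Submodule.span ℂ (u '' (T : Set (Fin s))) ≤ Submodule.span ℂ (u '' ↑B) := by
      apply Submodule.span_le.mpr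
      rintro x ⟨a, haT, rfl⟩
      exact hBspan a haT
    refine ⟨c, hc, Fin.cases B S', ?_, ?_, ?_⟩
    · intro j
      refine Fin.cases ?_ ?_ j
      · simpa using hBT
      · intro j'
        simpa using (hS'T j').trans (Finset.sdiff_subset)
    · have hdBS : ∀ j', Disjoint B (S' j') := by
        intro j'
        rw [Finset.disjoint_left]
        intro a haB haS
        exact (Finset.mem_sdiff.mp (hS'T j' haS)).2 haB
      intro j l hjl
      rcases Fin.eq_zero_or_eq_succ j with rfl | ⟨j', rfl⟩ <;>
        rcases Fin.eq_zero_or_eq_succ l with rfl | ⟨l', rfl⟩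
      · exact absurd rfl hjl
      · simpa using hdBS l'
      · simpa using (hdBS j').symm
      · have hne : j' ≠ l' := fun h => hjl (by rw [h])
        simpa using hS'disj hne
    · intro j
      rcases Fin.eq_zero_or_eq_succ j with rfl | ⟨j', rfl⟩
      · have h1 : c ∈ Submodule.span ℂ (u '' ↑(S' 0)) := hS'span 0
        have h2 : Submodule.span ℂ (u '' ↑(S' 0)) ≤ Submodule.span ℂ (u '' (T : Set (Fin s))) :=
          Submodule.span_mono (Set.image_mono
            (Finset.coe_subset.mpr ((hS'T 0).trans Finset.sdiff_subset)))
        simpa using hspanTB (h2 h1)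
      · simpa using hS'span j'





lemma auxPsd {m' n' : ℕ} (M : Matrix (Fin m') (Fin n') ℂ)
    (h : ∀ x : Fin n' → ℂ, ∑ i, Complex.normSq ((M *ᵥ x) i) ≤ ∑ j, Complex.normSq (x j)) :
    ((1 : Matrix (Fin n') (Fin n') ℂ) - Mᴴ * M).PosSemidef := by
  refine .of_dotProduct_mulVec_nonneg ?_ ?_
  · exact Matrix.isHermitian_one.sub (Matrix.isHermitian_conjTranspose_mul_self M)
  · intro x
    have hdot : ∀ {q : ℕ} (y : Fin q → ℂ),
        star y ⬝ᵥ y = ((∑ j, Complex.normSq (y j) : ℝ) : ℂ) := by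
      intro q y
      push_cast
      simp only [dotProduct, Pi.star_apply, RCLike.star_def]
      congr 1
      ext j
      rw [mul_comm, Complex.mul_conj]
    have key : star x ⬝ᵥ ((1 - Mᴴ * M) *ᵥ x)
        = ((∑ j, Complex.normSq (x j) : ℝ) : ℂ)
          - ((∑ i, Complex.normSq ((M *ᵥ x) i) : ℝ) : ℂ) := by
      rw [Matrix.sub_mulVec, dotProduct_sub, Matrix.one_mulVec]
      rw [← Matrix.mulVec_mulVec, Matrix.dotProduct_mulVec, ← Matrix.star_mulVec]
      rw [hdot x, hdot (M *ᵥ x)]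
    rw [key, ← Complex.ofReal_sub]
    exact Complex.zero_le_real.mpr (sub_nonneg.mpr (h x))


lemma auxRank {s k : ℕ} (E : Mat s → Mat s) (K : Fin k → Mat s)
    (hE : ∀ X, E X = ∑ i, K i * X * (K i)ᴴ) (v : Fin k → Fin s → ℂ)
    (hv : ∀ i, K i = Matrix.diagonal (v i)) (T : Finset (Fin s)) :
    Module.finrank ℂ (Submodule.span ℂ ((fun a => fun i => v i a) '' ↑T)) ≤ (choi E).rank := by
  classical
  set u : Fin s → (Fin k → ℂ) := fun a => fun i => v i a with hu
  set U : Matrix (Fin s) (Fin k) ℂ := Matrix.of u with hU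
  set P : Matrix (Fin s) (Fin s × Fin s) ℂ :=
    Matrix.of (fun (a : Fin s) (p : Fin s × Fin s) => if p = (a, a) then (1 : ℂ) else 0) with hP
  have h1 : Module.finrank ℂ (Submodule.span ℂ (u '' ↑T))
      ≤ Module.finrank ℂ (Submodule.span ℂ (Set.range u)) :=
    Submodule.finrank_mono (Submodule.span_mono (Set.image_subset_range u ↑T))
  have h3 : (Uᵀ).rank = Module.finrank ℂ (Submodule.span ℂ (Set.range u)) := by
    rw [Matrix.rank_eq_finrank_span_cols]
    rfl
  have hchoi : ∀ a b : Fin s, choi E (a, a) (b, b) = (E (single a b 1)) a b := by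
    intro a b
    simp only [choi, Matrix.sum_apply, Matrix.kroneckerMap_apply, Matrix.single,
      Matrix.of_apply, mul_ite, mul_one, mul_zero, ite_and]
    simp [Finset.sum_ite_eq']
  have hentry : ∀ a b : Fin s, (E (single a b 1)) a b = ∑ i, v i a * (starRingEnd ℂ) (v i b) := by
    intro a b
    rw [hE]
    simp only [Matrix.sum_apply]
    congr 1
    ext i
    rw [hv i, Matrix.diagonal_conjTranspose]
    rw [Matrix.mul_diagonal, Matrix.diagonal_mul, Matrix.single_apply_same]
    simp [Pi.star_apply, mul_one]
  have h6 : U * Uᴴ = P * choi E * Pᴴ := by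
    ext a b
    have hrhs : (P * choi E * Pᴴ) a b = choi E (a, a) (b, b) := by
      simp only [Matrix.mul_apply, Matrix.conjTranspose_apply, hP, Matrix.of_apply,
        ite_mul, one_mul, zero_mul, apply_ite (starRingEnd ℂ), _root_.map_one, _root_.map_zero, mul_ite, mul_one, mul_zero]
      simp [Finset.sum_ite_eq', Finset.sum_ite_eq]
    rw [hrhs, hchoi, hentry]
    simp [hU, Matrix.mul_apply, Matrix.conjTranspose_apply, hu]
  have h7 : (P * choi E * Pᴴ).rank ≤ (choi E).rank :=
    le_trans (Matrix.rank_mul_le_left _ _) (Matrix.rank_mul_le_right _ _)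
  have h5 : U.rank = (U * Uᴴ).rank := (Matrix.rank_self_mul_conjTranspose U).symm
  have h4 : (Uᵀ).rank = U.rank := Matrix.rank_transpose U
  calc Module.finrank ℂ (Submodule.span ℂ (u '' ↑T))
      ≤ Module.finrank ℂ (Submodule.span ℂ (Set.range u)) := h1
    _ = (Uᵀ).rank := h3.symm
    _ = U.rank := h4
    _ = (U * Uᴴ).rank := h5
    _ = (P * choi E * Pᴴ).rank := by rw [h6]
    _ ≤ (choi E).rank := h7

end Aux


/-- Proposition 5: a Schur (diagonal-Kraus) channel on `M_s` with Choi rank `< s/(d−1)`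
is probabilistically correctable for `ℂ^d`. -/
theorem stmt_14 (d s : ℕ) (hd : 1 ≤ d) (hds : d ≤ s) (E : Mat s → Mat s)
    (hSchur : ∃ (k : ℕ) (K : Fin k → Mat s),
      (∀ X, E X = ∑ i, K i * X * (K i)ᴴ) ∧ (∑ i, (K i)ᴴ * K i) = 1 ∧
      ∀ i, ∃ v : Fin s → ℂ, K i = Matrix.diagonal v)
    (hrank : (choi E).rank * (d - 1) < s) :
    ProbCorrectable d E := by
  classical
  obtain ⟨k, K, hE, hK1, hKdiag⟩ := hSchur
  choose v hv using hKdiag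
  set u : Fin s → (Fin k → ℂ) := fun a => fun i => v i a with hu_def
  obtain ⟨m, rfl⟩ : ∃ m, d = m + 1 := ⟨d - 1, by omega⟩
  have hs0 : 0 < s := by omega
  -- nonzero columns
  have hu : ∀ a, u a ≠ 0 := by
    intro a h0
    have h3 : ∀ i, v i a = 0 := fun i => congrFun h0 i
    have h1 : (∑ i, (K i)ᴴ * K i) a a = (1 : Mat s) a a := by rw [hK1]
    rw [Matrix.sum_apply] at h1
    have h4 : ∀ i ∈ (Finset.univ : Finset (Fin k)), ((K i)ᴴ * K i) a a = 0 := by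
      intro i _
      rw [hv i, Matrix.diagonal_conjTranspose, Matrix.diagonal_mul_diagonal,
        Matrix.diagonal_apply_eq]
      simp [h3 i]
    rw [Finset.sum_eq_zero h4] at h1
    simp only [Matrix.one_apply_eq] at h1
    exact zero_ne_one h1
  -- rank bound
  set n : ℕ := (choi E).rank with hn_def
  have hfr : ∀ T : Finset (Fin s), Module.finrank ℂ (Submodule.span ℂ (u '' ↑T)) ≤ n :=
    fun T => auxRank E K hE v hv T
  -- groups
  have hsm : n * m < (Finset.univ : Finset (Fin s)).card := by
    have : n * (m + 1 - 1) < s := hrank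
    simpa using this
  obtain ⟨c, hc, S, hST, hSdisj, hSspan⟩ := auxGroups u hu n hfr m Finset.univ hsm
  -- coefficients
  have hzex : ∀ j, ∃ l : Fin s →₀ ℂ, (∀ a, a ∉ S j → l a = 0) ∧
      ∀ i, ∑ a, l a * u a i = c i := by
    intro j
    obtain ⟨l, hlsupp, hlc⟩ := (Finsupp.mem_span_image_iff_linearCombination ℂ).mp (hSspan j)
    refine ⟨l, ?_, ?_⟩
    · intro a ha
      exact (Finsupp.mem_supported' ℂ l).mp hlsupp a (by simpa using ha)
    · intro i
      have h2 : ∑ a, l a • u a = c := by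
        rw [← hlc, Finsupp.linearCombination_apply, Finsupp.sum]
        exact (Finset.sum_subset (Finset.subset_univ _)
          (fun a _ ha => by rw [Finsupp.notMem_support_iff.mp ha, zero_smul])).symm
      calc ∑ a, l a * u a i = (∑ a, l a • u a) i := by
            simp [Finset.sum_apply, Pi.smul_apply, smul_eq_mul]
        _ = c i := by rw [h2]
  choose z hzsupp hzc using hzex
  have hzdisj : ∀ {j l : Fin (m + 1)}, j ≠ l → ∀ a, z j a * z l a = 0 := by
    intro j l hjl a
    by_cases hj : z j a = 0
    · simp [hj]
    · have haj : a ∈ S j := by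
        by_contra h
        exact hj (hzsupp j a h)
      have hal : a ∉ S l := Finset.disjoint_left.mp (hSdisj hjl) haj
      simp [hzsupp l a hal]
  -- scalars
  set Nr : ℝ := 1 + ∑ j, ∑ a, Complex.normSq (z j a) with hNr_def
  have hNpos : 0 < Nr := by
    have : (0:ℝ) ≤ ∑ j, ∑ a, Complex.normSq (z j a) :=
      Finset.sum_nonneg fun j _ => Finset.sum_nonneg fun a _ => Complex.normSq_nonneg _
    simp only [hNr_def]; linarith
  have hTle : ∀ j, ∑ a, Complex.normSq (z j a) ≤ Nr := by
    intro j
    have h1 : ∑ a, Complex.normSq (z j a) ≤ ∑ j', ∑ a, Complex.normSq (z j' a) :=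
      Finset.single_le_sum (f := fun j' => ∑ a, Complex.normSq (z j' a))
        (fun j' _ => Finset.sum_nonneg fun a _ => Complex.normSq_nonneg _) (Finset.mem_univ j)
    simp only [hNr_def]; linarith
  set ν : ℝ := (Real.sqrt Nr)⁻¹ with hν_def
  have hνpos : 0 < ν := inv_pos.mpr (Real.sqrt_pos.mpr hNpos)
  have hν2 : ν ^ 2 = Nr⁻¹ := by
    rw [hν_def, ← Real.sqrt_inv, Real.sq_sqrt (inv_nonneg.mpr hNpos.le)]
  set D : ℝ := ((m : ℝ) + 1) * (s : ℝ) with hD_def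
  have hDpos : 0 < D := by
    have : (0:ℝ) < (s:ℝ) := by exact_mod_cast hs0
    have h2 : (0:ℝ) < (m:ℝ) + 1 := by positivity
    positivity
  set μ : ℝ := (Real.sqrt D)⁻¹ with hμ_def
  have hμpos : 0 < μ := inv_pos.mpr (Real.sqrt_pos.mpr hDpos)
  have hμ2 : μ ^ 2 = D⁻¹ := by
    rw [hμ_def, ← Real.sqrt_inv, Real.sq_sqrt (inv_nonneg.mpr hDpos.le)]
  -- matrices
  set V : Matrix (Fin s) (Fin (m + 1)) ℂ :=
    Matrix.of (fun a j => (ν : ℂ) * z j a) with hV_def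
  set W : Matrix (Fin (m + 1)) (Fin s) ℂ :=
    Matrix.of (fun j a => if z j a = 0 then 0 else (μ : ℂ)) with hW_def
  -- key intertwining
  have hWKV : ∀ i, W * K i * V = (((μ : ℂ) * (ν : ℂ)) * c i) • (1 : Mat (m + 1)) := by
    intro i
    ext j l
    have hWK : ∀ a, (W * K i) j a = W j a * v i a := by
      intro a
      rw [hv i, Matrix.mul_diagonal]
    rw [Matrix.mul_apply]
    simp only [hWK]
    by_cases hjl : j = l
    · subst hjl
      have hterm : ∀ a, W j a * v i a * V a j = (μ : ℂ) * (ν : ℂ) * (z j a * v i a) := by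
        intro a
        by_cases hz : z j a = 0
        · simp [hW_def, hV_def, hz]
        · simp only [hW_def, hV_def, Matrix.of_apply, if_neg hz]
          ring
      rw [Finset.sum_congr rfl (fun a _ => hterm a)]
      rw [← Finset.mul_sum]
      have : ∑ a, z j a * v i a = c i := hzc j i
      rw [this]
      simp [Matrix.smul_apply, Matrix.one_apply_eq]
    · have hterm0 : ∀ a, W j a * v i a * V a l = 0 := by
        intro a
        by_cases hz : z j a = 0
        · simp [hW_def, hz]
        · have : z l a = 0 := by
            have := hzdisj hjl a
            rcases mul_eq_zero.mp this with h | h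
            · exact absurd h hz
            · exact h
          simp [hV_def, this]
      rw [Finset.sum_congr rfl (fun a _ => hterm0 a)]
      simp [Matrix.smul_apply, Matrix.one_apply_ne hjl]
  -- subchannel S
  have hVV : Vᴴ * V = Matrix.diagonal
      (fun j => ((ν ^ 2 * ∑ a, Complex.normSq (z j a) : ℝ) : ℂ)) := by
    ext j l
    rw [Matrix.mul_apply]
    simp only [Matrix.conjTranspose_apply, hV_def, Matrix.of_apply]
    by_cases hjl : j = l
    · subst hjl
      rw [Matrix.diagonal_apply_eq]
      have hterm : ∀ a, star ((ν : ℂ) * z j a) * ((ν : ℂ) * z j a)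
          = ((ν ^ 2 * Complex.normSq (z j a) : ℝ) : ℂ) := by
        intro a
        rw [star_mul', Complex.star_def, Complex.conj_ofReal]
        have h0 : (starRingEnd ℂ) (z j a) * z j a = (Complex.normSq (z j a) : ℂ) := by
          rw [mul_comm, Complex.mul_conj]
        calc ((ν : ℂ) * (starRingEnd ℂ) (z j a)) * ((ν : ℂ) * z j a)
            = (ν : ℂ) ^ 2 * ((starRingEnd ℂ) (z j a) * z j a) := by ring
          _ = ((ν ^ 2 * Complex.normSq (z j a) : ℝ) : ℂ) := by rw [h0]; push_cast; ring
      rw [Finset.sum_congr rfl (fun a _ => hterm a)]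
      push_cast
      rw [Finset.mul_sum]
    · rw [Matrix.diagonal_apply_ne _ hjl]
      apply Finset.sum_eq_zero
      intro a _
      rcases mul_eq_zero.mp (hzdisj hjl a) with h | h
      · simp [h]
      · simp [h]
  have hSub1 : ((1 : Mat (m + 1)) - Vᴴ * V).PosSemidef := by
    rw [hVV, ← Matrix.diagonal_one, Matrix.diagonal_sub]
    rw [Matrix.posSemidef_diagonal_iff]
    intro j
    have h1 : ν ^ 2 * ∑ a, Complex.normSq (z j a) ≤ 1 := by
      rw [hν2]
      have h2 : Nr⁻¹ * (∑ a, Complex.normSq (z j a)) ≤ Nr⁻¹ * Nr :=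
        mul_le_mul_of_nonneg_left (hTle j) (inv_nonneg.mpr hNpos.le)
      rwa [inv_mul_cancel₀ (ne_of_gt hNpos)] at h2
    have h3 : (1 : ℂ) - ((ν ^ 2 * ∑ a, Complex.normSq (z j a) : ℝ) : ℂ)
        = ((1 - ν ^ 2 * ∑ a, Complex.normSq (z j a) : ℝ) : ℂ) := by
      push_cast
      ring
    rw [h3]
    exact Complex.zero_le_real.mpr (by linarith)
  -- subchannel R
  have hSub2 : ((1 : Mat s) - Wᴴ * W).PosSemidef := by
    apply auxPsd
    intro x
    have habs : ∀ j, ‖(W *ᵥ x) j‖ ≤ μ * ∑ a, ‖x a‖ := by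
      intro j
      rw [Matrix.mulVec, dotProduct]
      calc ‖∑ a, W j a * x a‖ ≤ ∑ a, ‖W j a * x a‖ :=
            norm_sum_le _ _
        _ ≤ ∑ a, μ * ‖x a‖ := by
            apply Finset.sum_le_sum
            intro a _
            rw [norm_mul]
            apply mul_le_mul_of_nonneg_right _ (norm_nonneg _)
            by_cases hz : z j a = 0
            · simp [hW_def, hz, hμpos.le]
            · simp [hW_def, hz, Complex.norm_real, abs_of_pos hμpos]
        _ = μ * ∑ a, ‖x a‖ := by rw [Finset.mul_sum]
    have hsq : (∑ a, ‖x a‖) ^ 2 ≤ (s : ℝ) * ∑ a, ‖x a‖ ^ 2 := by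
      have := sq_sum_le_card_mul_sum_sq (s := (Finset.univ : Finset (Fin s)))
        (f := fun a => ‖x a‖)
      simpa using this
    have hterm : ∀ j, Complex.normSq ((W *ᵥ x) j) ≤ μ ^ 2 * (∑ a, ‖x a‖) ^ 2 := by
      intro j
      rw [Complex.normSq_eq_norm_sq]
      calc ‖(W *ᵥ x) j‖ ^ 2 ≤ (μ * ∑ a, ‖x a‖) ^ 2 := by
            apply pow_le_pow_left₀ (norm_nonneg _) (habs j)
        _ = μ ^ 2 * (∑ a, ‖x a‖) ^ 2 := by ring
    calc ∑ j, Complex.normSq ((W *ᵥ x) j)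
        ≤ ∑ _j : Fin (m + 1), μ ^ 2 * (∑ a, ‖x a‖) ^ 2 :=
          Finset.sum_le_sum (fun j _ => hterm j)
      _ = ((m : ℝ) + 1) * (μ ^ 2 * (∑ a, ‖x a‖) ^ 2) := by
          rw [Finset.sum_const, Finset.card_univ, Fintype.card_fin]
          push_cast; ring
      _ ≤ ((m : ℝ) + 1) * (μ ^ 2 * ((s : ℝ) * ∑ a, ‖x a‖ ^ 2)) := by
          apply mul_le_mul_of_nonneg_left _ (by positivity)
          apply mul_le_mul_of_nonneg_left hsq (by positivity)
      _ = (D * μ ^ 2) * ∑ a, ‖x a‖ ^ 2 := by rw [hD_def]; ring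
      _ = ∑ a, ‖x a‖ ^ 2 := by
          rw [hμ2, mul_inv_cancel₀ (ne_of_gt hDpos), one_mul]
      _ = ∑ a, Complex.normSq (x a) := by
          apply Finset.sum_congr rfl
          intro a _
          rw [Complex.normSq_eq_norm_sq]
  -- assemble
  set p : ℝ := μ ^ 2 * ν ^ 2 * ∑ i, Complex.normSq (c i) with hp_def
  have hppos : 0 < p := by
    obtain ⟨i0, hi0⟩ := Function.ne_iff.mp hc
    have hsum : 0 < ∑ i, Complex.normSq (c i) :=
      Finset.sum_pos' (fun i _ => Complex.normSq_nonneg _)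
        ⟨i0, Finset.mem_univ i0, Complex.normSq_pos.mpr hi0⟩
    positivity
  refine ⟨fun X => V * X * Vᴴ, fun Y => W * Y * Wᴴ, p, ?_, ?_, hppos, ?_⟩
  · exact ⟨1, fun _ => V, fun X => by simp, by simpa using hSub1⟩
  · exact ⟨1, fun _ => W, fun Y => by simp, by simpa using hSub2⟩
  · intro X
    rw [hE]
    simp only [Matrix.mul_sum, Matrix.sum_mul]
    have hterm : ∀ i, W * (K i * (V * X * Vᴴ) * (K i)ᴴ) * Wᴴ
        = ((μ ^ 2 * ν ^ 2 * Complex.normSq (c i) : ℝ) : ℂ) • X := by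
      intro i
      have h1 : W * (K i * (V * X * Vᴴ) * (K i)ᴴ) * Wᴴ
          = (W * K i * V) * X * (W * K i * V)ᴴ := by
        rw [Matrix.conjTranspose_mul, Matrix.conjTranspose_mul]
        simp only [Matrix.mul_assoc]
      rw [h1, hWKV i]
      have hscal : ((μ : ℂ) * (ν : ℂ) * c i) * star ((μ : ℂ) * (ν : ℂ) * c i)
          = ((μ ^ 2 * ν ^ 2 * Complex.normSq (c i) : ℝ) : ℂ) := by
        rw [Complex.star_def, Complex.mul_conj]
        push_cast [Complex.normSq_mul, Complex.normSq_ofReal]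
        ring
      simp only [Matrix.conjTranspose_smul, Matrix.conjTranspose_one, Matrix.smul_mul,
        Matrix.mul_smul, Matrix.one_mul, Matrix.mul_one, smul_smul]
      congr 1
      rw [mul_comm]
      exact hscal
    rw [Finset.sum_congr rfl (fun i _ => hterm i)]
    rw [← Finset.sum_smul]
    congr 1
    rw [hp_def]
    push_cast
    rw [Finset.mul_sum]
end
end

section
/- Let E₀, E₁ be 4×4 complex matrices with E₀* E₀ + E₁* E₁ = I₄, and let E be the channel on M_4 given by E(X) = E₀ X E₀* + E₁ X E₁*. Then E is probabilistically correctable for ℂ²: there exist a subchannel S from M_2 to M_4, a subchannel R from M_4 to M_2, and a real p > 0 such that R(E(S(X))) = p·X for all X ∈ M_2. -/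
open Matrix Kronecker BigOperators
open scoped ComplexOrder

noncomputable section

namespace Stmt19Aux

abbrev V4 := Fin 4 → ℂ

/-- dual functionals: prescribe values on a linearly independent family. -/
lemma exists_dual {k : ℕ} (u : Fin k → V4) (hu : LinearIndependent ℂ u) (c : Fin k → ℂ) :
    ∃ f : Fin 4 → ℂ, ∀ j, f ⬝ᵥ u j = c j := by
  set p := Submodule.span ℂ (Set.range u) with hp
  let b : Module.Basis (Fin k) ℂ p := Module.Basis.span hu
  let g : p →ₗ[ℂ] ℂ := b.constr ℂ c
  obtain ⟨h, hh⟩ := LinearMap.exists_extend g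
  refine ⟨fun i => h (Pi.single i 1), fun j => ?_⟩
  have hbj : ((b j : p) : V4) = u j := congrArg Subtype.val (Module.Basis.span_apply hu j)
  have h1 : h (u j) = c j := by
    have : h ((b j : p) : V4) = g (b j) := by
      conv_rhs => rw [← hh]
      rfl
    rw [hbj] at this
    rw [this]
    simpa [g] using b.constr_basis ℂ c j
  have key : ∑ i, u j i • (Pi.single i 1 : V4) = u j := by
    ext s
    simp [Pi.single_apply]
  calc (fun i => h (Pi.single i 1)) ⬝ᵥ u j
      = ∑ i, h (u j i • (Pi.single i 1 : V4)) := by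
        simp [dotProduct, mul_comm]
    _ = h (∑ i, u j i • (Pi.single i 1 : V4)) := by rw [map_sum]
    _ = h (u j) := by rw [key]
    _ = c j := h1

/-- If the range of a linear map on `ℂ⁴` is contained in the span of two vectors,
its kernel contains a linearly independent pair. -/
lemma kernel_pair {W : Type*} [AddCommGroup W] [Module ℂ W]
    (T : V4 →ₗ[ℂ] W) (w1 w2 : W) (hr : ∀ v, T v ∈ Submodule.span ℂ ({w1, w2} : Set W)) :
    ∃ w : Fin 2 → V4, LinearIndependent ℂ w ∧ T (w 0) = 0 ∧ T (w 1) = 0 := by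
  classical
  haveI hfd : FiniteDimensional ℂ (Submodule.span ℂ ({w1, w2} : Set W)) :=
    FiniteDimensional.span_of_finite ℂ (Set.toFinite _)
  haveI : Fintype ({w1, w2} : Set W) := (Set.toFinite _).fintype
  have hcard : ({w1, w2} : Set W).toFinset.card ≤ 2 := by
    rw [Set.toFinset_insert, Set.toFinset_singleton]
    exact (Finset.card_insert_le _ _).trans (by simp)
  have hsp : Module.finrank ℂ (Submodule.span ℂ ({w1, w2} : Set W)) ≤ 2 :=
    (finrank_span_le_card _).trans hcard
  have hrange : LinearMap.range T ≤ Submodule.span ℂ ({w1, w2} : Set W) := by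
    rintro _ ⟨v, rfl⟩; exact hr v
  have hr2 : Module.finrank ℂ (LinearMap.range T) ≤ 2 :=
    (Submodule.finrank_mono hrange).trans hsp
  have hrn : Module.finrank ℂ (LinearMap.range T) + Module.finrank ℂ (LinearMap.ker T) = 4 := by
    rw [LinearMap.finrank_range_add_finrank_ker]
    simp [V4]
  have hker : 2 ≤ Module.finrank ℂ (LinearMap.ker T) := by omega
  obtain ⟨w', hw'⟩ := exists_linearIndependent_of_le_finrank hker
  refine ⟨fun i => (w' i : V4), hw'.map' (LinearMap.ker T).subtype (Submodule.ker_subtype _), ?_, ?_⟩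
  · exact (w' 0).2
  · exact (w' 1).2

end Stmt19Aux

namespace Stmt19Aux

lemma dep_of_pair {W : Type*} [AddCommGroup W] [Module ℂ W] {w z : W}
    (hw : w ≠ 0) (hdep : ¬ LinearIndependent ℂ ![w, z]) : ∃ c : ℂ, z = c • w := by
  rw [LinearIndependent.pair_iff] at hdep
  push_neg at hdep
  obtain ⟨s, t, hst, hne⟩ := hdep
  by_cases ht : t = 0
  · subst ht
    rw [zero_smul, add_zero] at hst
    rcases smul_eq_zero.mp hst with hs | hw'
    · exact absurd rfl (hne hs)
    · exact absurd hw' hw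
  · refine ⟨-(s/t), ?_⟩
    have : t • z = -(s • w) := eq_neg_of_add_eq_zero_right hst
    have := congrArg (fun q => t⁻¹ • q) this
    simp only [smul_smul, inv_mul_cancel₀ ht, one_smul, smul_neg] at this
    rw [this, ← smul_smul]
    simp [neg_div, div_eq_inv_mul, smul_smul, neg_smul]

lemma parallel_images (E0 E1 : Matrix (Fin 4) (Fin 4) ℂ) {a b : ℂ}
    (hab : a ≠ 0 ∨ b ≠ 0) (v : V4) (hGv : (b • E0 - a • E1) *ᵥ v = 0) :
    ∃ u : V4, E0 *ᵥ v = a • u ∧ E1 *ᵥ v = b • u := by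
  have hrel : b • (E0 *ᵥ v) = a • (E1 *ᵥ v) := by
    have := hGv
    rw [Matrix.sub_mulVec, Matrix.smul_mulVec, Matrix.smul_mulVec,
      sub_eq_zero] at this
    exact this
  by_cases ha : a ≠ 0
  · refine ⟨a⁻¹ • (E0 *ᵥ v), ?_, ?_⟩
    · rw [smul_smul, mul_inv_cancel₀ ha, one_smul]
    · have := congrArg (fun q => a⁻¹ • q) hrel
      simp only [smul_smul] at this
      rw [mul_comm a⁻¹ b] at this
      rw [inv_mul_cancel₀ ha, one_smul] at this
      rw [← this, ← smul_smul]
  · push_neg at ha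
    subst ha
    have hb : b ≠ 0 := by tauto
    have hE0v : E0 *ᵥ v = 0 := by
      have : b • (E0 *ᵥ v) = 0 := by simpa using hrel
      rcases smul_eq_zero.mp this with h | h
      · exact absurd h hb
      · exact h
    refine ⟨b⁻¹ • (E1 *ᵥ v), by simp [hE0v], ?_⟩
    rw [smul_smul, mul_inv_cancel₀ hb, one_smul]

end Stmt19Aux

namespace Stmt19Aux

lemma exists_singular_member (E0 E1 : Matrix (Fin 4) (Fin 4) ℂ) :
    ∃ a b : ℂ, (a ≠ 0 ∨ b ≠ 0) ∧ ∃ v : V4, v ≠ 0 ∧ (b • E0 - a • E1) *ᵥ v = 0 := by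
  by_cases hE0 : ∃ v : V4, v ≠ 0 ∧ E0 *ᵥ v = 0
  · obtain ⟨v, hv, hv0⟩ := hE0
    exact ⟨0, 1, Or.inr one_ne_zero, v, hv, by simpa using hv0⟩
  · push_neg at hE0
    have hinj : Function.Injective E0.mulVec := by
      intro x y hxy
      have hz : E0 *ᵥ (x - y) = 0 := by
        rw [Matrix.mulVec_sub, hxy, sub_self]
      by_contra hne
      exact (hE0 (x - y) (sub_ne_zero.mpr hne)) hz
    have hunit : IsUnit E0 := Matrix.mulVec_injective_iff_isUnit.mp hinj
    have hdet : IsUnit E0.det := E0.isUnit_iff_isUnit_det.mp hunit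
    set F := E0⁻¹ * E1 with hF
    obtain ⟨μ, hμ⟩ := Module.End.exists_eigenvalue F.mulVecLin
    obtain ⟨v, hv⟩ := hμ.exists_hasEigenvector
    have hv0 : v ≠ 0 := hv.right
    have happ : F *ᵥ v = μ • v := by
      have := hv.apply_eq_smul
      simpa [Matrix.mulVecLin_apply] using this
    have hE1v : E1 *ᵥ v = μ • (E0 *ᵥ v) := by
      have : E0 *ᵥ (F *ᵥ v) = E1 *ᵥ v := by
        rw [Matrix.mulVec_mulVec, hF, ← Matrix.mul_assoc, Matrix.mul_nonsing_inv E0 hdet,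
          Matrix.one_mul]
      rw [← this, happ, Matrix.mulVec_smul]
    refine ⟨1, μ, Or.inl one_ne_zero, v, hv0, ?_⟩
    rw [Matrix.sub_mulVec, Matrix.smul_mulVec, Matrix.smul_mulVec, one_smul,
      ← hE1v, sub_self]

end Stmt19Aux

namespace Stmt19Aux

lemma branchIIb (E0 E1 : Matrix (Fin 4) (Fin 4) ℂ)
    (H : ∀ a b : ℂ, (a ≠ 0 ∨ b ≠ 0) → ∀ w : Fin 2 → V4, LinearIndependent ℂ w →
      ¬((b • E0 - a • E1) *ᵥ w 0 = 0 ∧ (b • E0 - a • E1) *ᵥ w 1 = 0))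
    (u1 : V4) (hu1 : u1 ≠ 0)
    (hnot : ∀ v : V4, ¬ LinearIndependent ℂ ![u1, E0 *ᵥ v, E1 *ᵥ v]) : False := by
  classical
  set p : Submodule ℂ V4 := Submodule.span ℂ {u1} with hpdef
  set π := p.mkQ with hπdef
  set B0 : V4 →ₗ[ℂ] (V4 ⧸ p) := π ∘ₗ E0.mulVecLin with hB0def
  set B1 : V4 →ₗ[ℂ] (V4 ⧸ p) := π ∘ₗ E1.mulVecLin with hB1def
  have hπu1 : π u1 = 0 := by
    rw [hπdef, Submodule.mkQ_apply, Submodule.Quotient.mk_eq_zero]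
    exact Submodule.mem_span_singleton_self u1
  have hmem : ∀ x : V4, π x = 0 → x ∈ p := by
    intro x hx
    rwa [hπdef, Submodule.mkQ_apply, Submodule.Quotient.mk_eq_zero] at hx
  have hB0app : ∀ v, B0 v = π (E0 *ᵥ v) := fun v => rfl
  have hB1app : ∀ v, B1 v = π (E1 *ᵥ v) := fun v => rfl
  -- pointwise dependence in the quotient
  have hdep : ∀ v : V4, ∃ β γ : ℂ, ¬(β = 0 ∧ γ = 0) ∧ β • B0 v + γ • B1 v = 0 := by
    intro v
    obtain ⟨g, hg, i, hgi⟩ := Fintype.not_linearIndependent_iff.mp (hnot v)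
    rw [Fin.sum_univ_three] at hg
    simp only [Matrix.cons_val_zero, Matrix.cons_val_one, Matrix.head_cons,
      Matrix.cons_val_two, Matrix.tail_cons] at hg
    refine ⟨g 1, g 2, ?_, ?_⟩
    · rintro ⟨h1, h2⟩
      have hg0 : g 0 ≠ 0 := by
        fin_cases i <;> simp_all
      rw [h1, h2, zero_smul, zero_smul, add_zero, add_zero] at hg
      exact hu1 ((smul_eq_zero.mp hg).resolve_left hg0)
    · have hg' : g 0 • u1 + (g 1 • (E0 *ᵥ v) + g 2 • (E1 *ᵥ v)) = 0 := by
        rw [← add_assoc]; exact hg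
      have hthis : g 1 • (E0 *ᵥ v) + g 2 • (E1 *ᵥ v) = -(g 0 • u1) :=
        eq_neg_of_add_eq_zero_right hg'
      rw [hB0app, hB1app, ← _root_.map_smul π, ← _root_.map_smul π, ← map_add, hthis,
        map_neg, _root_.map_smul, hπu1, smul_zero, neg_zero]
  -- rank of B0 is at least two
  have hrk0 : ∃ x y : V4, LinearIndependent ℂ ![B0 x, B0 y] := by
    by_contra hno
    push_neg at hno
    have hcontr : ∀ w1 w2 : V4, (∀ v, E0.mulVecLin v ∈ Submodule.span ℂ ({w1, w2} : Set V4)) → False := by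
      intro w1 w2 hr
      obtain ⟨w, hwli, hw0, hw1⟩ := kernel_pair E0.mulVecLin w1 w2 hr
      refine H 0 1 (Or.inr one_ne_zero) w hwli ⟨?_, ?_⟩
      · simpa [Matrix.sub_mulVec, Matrix.smul_mulVec, Matrix.mulVecLin_apply] using hw0
      · simpa [Matrix.sub_mulVec, Matrix.smul_mulVec, Matrix.mulVecLin_apply] using hw1
    by_cases hz : ∀ x, B0 x = 0
    · refine hcontr u1 u1 fun v => ?_
      rw [Set.pair_eq_singleton]
      exact hmem _ (hz v)
    · push_neg at hz
      obtain ⟨x0, hx0⟩ := hz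
      refine hcontr u1 (E0 *ᵥ x0) fun v => ?_
      obtain ⟨c, hc⟩ := dep_of_pair hx0 (hno x0 v)
      have : π ((E0 *ᵥ v) - c • (E0 *ᵥ x0)) = 0 := by
        rw [map_sub, _root_.map_smul, ← hB0app, ← hB0app, hc, sub_self]
      obtain ⟨d, hd⟩ := Submodule.mem_span_singleton.mp (hmem _ this)
      rw [Submodule.mem_span_pair]
      refine ⟨d, c, ?_⟩
      simp only [Matrix.mulVecLin_apply]
      rw [hd]
      abel
  obtain ⟨x, y, hxy⟩ := hrk0
  have hBx : B0 x ≠ 0 := by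
    have := hxy.ne_zero 0
    simpa using this
  have hBy : B0 y ≠ 0 := by
    have := hxy.ne_zero 1
    simpa using this
  -- pointwise ratio
  have hmu : ∀ v : V4, B0 v ≠ 0 → ∃ μ : ℂ, B1 v = μ • B0 v := by
    intro v hv
    obtain ⟨β, γ, hβγ, heq⟩ := hdep v
    have hγ : γ ≠ 0 := by
      intro hγ0
      rw [hγ0, zero_smul, add_zero] at heq
      rcases smul_eq_zero.mp heq with hβ0 | h0
      · exact hβγ ⟨hβ0, hγ0⟩
      · exact hv h0
    have : γ • B1 v = -(β • B0 v) := eq_neg_of_add_eq_zero_right heq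
    refine ⟨-(β/γ), ?_⟩
    have := congrArg (fun q => γ⁻¹ • q) this
    simp only [smul_smul, inv_mul_cancel₀ hγ, one_smul, smul_neg] at this
    rw [this, ← smul_smul]
    simp [neg_div, div_eq_inv_mul, smul_smul, neg_smul]
  -- the ratio is the same at two "independent" points
  have hstep : ∀ (v w : V4) (μv μw : ℂ), LinearIndependent ℂ ![B0 v, B0 w] →
      B1 v = μv • B0 v → B1 w = μw • B0 w → μv = μw := by
    intro v w μv μw hli hμv hμw
    have hsum : B0 (v + w) = B0 v + B0 w := map_add _ _ _
    have hsne : B0 (v + w) ≠ 0 := by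
      rw [hsum]
      intro h0
      have := (LinearIndependent.pair_iff.mp hli 1 1 (by simpa using h0)).1
      exact one_ne_zero this
    obtain ⟨μs, hμs⟩ := hmu _ hsne
    have e : μv • B0 v + μw • B0 w = μs • B0 v + μs • B0 w := by
      have h1 : B1 (v + w) = B1 v + B1 w := map_add _ _ _
      rw [hμs, hsum, smul_add, hμv, hμw] at h1
      exact h1.symm
    have hkey : (μv - μs) • B0 v + (μw - μs) • B0 w = 0 := by
      have h2 : (μv - μs) • B0 v + (μw - μs) • B0 w =
          (μv • B0 v + μw • B0 w) - (μs • B0 v + μs • B0 w) := by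
        rw [sub_smul, sub_smul]; abel
      rw [h2, e, sub_self]
    obtain ⟨h1, h2⟩ := LinearIndependent.pair_iff.mp hli _ _ hkey
    have e1 : μv = μs := by rwa [sub_eq_zero] at h1
    have e2 : μw = μs := by rwa [sub_eq_zero] at h2
    rw [e1, e2]
  obtain ⟨lam, hlamx⟩ := hmu x hBx
  obtain ⟨μy, hμy⟩ := hmu y hBy
  have hlam_y : μy = lam := (hstep x y lam μy hxy hlamx hμy).symm
  -- the ratio is constant wherever B0 is nonzero
  have hconst : ∀ v : V4, B0 v ≠ 0 → B1 v = lam • B0 v := by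
    intro v hv
    obtain ⟨μ, hμ⟩ := hmu v hv
    by_cases hli : LinearIndependent ℂ ![B0 x, B0 v]
    · rw [hμ, hstep x v lam μ hli hlamx hμ]
    · obtain ⟨c, hc⟩ := dep_of_pair hBx hli
      have hcne : c ≠ 0 := by
        intro h0
        rw [h0, zero_smul] at hc
        exact hv hc
      have hyv : LinearIndependent ℂ ![B0 y, B0 v] := by
        rw [LinearIndependent.pair_iff]
        intro s t hst
        rw [hc, smul_smul] at hst
        have : (t * c) • B0 x + s • B0 y = 0 := by rw [← hst]; abel
        obtain ⟨h1, h2⟩ := LinearIndependent.pair_iff.mp hxy _ _ this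
        exact ⟨h2, by
          rcases mul_eq_zero.mp h1 with h | h
          · exact h
          · exact absurd h hcne⟩
      have := hstep y v μy μ hyv hμy hμ
      rw [hμ, ← this, hlam_y]
  -- hence B1 = lam • B0 everywhere
  have hall : ∀ v : V4, B1 v = lam • B0 v := by
    intro v
    by_cases hv : B0 v = 0
    · have h1 : B0 (x + v) = B0 x := by rw [map_add, hv, add_zero]
      have h2 : B1 (x + v) = lam • B0 (x + v) := hconst _ (by rw [h1]; exact hBx)
      have h3 : B1 x + B1 v = lam • B0 x := by
        rw [← map_add, h2, h1]
      rw [hlamx] at h3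
      have : B1 v = 0 := by
        have := congrArg (fun q => q - lam • B0 x) h3
        simpa using this
      rw [this, hv, smul_zero]
    · exact hconst v hv
  -- contradiction with H
  have hker2 : ∀ v : V4, (E1 - lam • E0).mulVecLin v ∈ Submodule.span ℂ ({u1, u1} : Set V4) := by
    intro v
    rw [Set.pair_eq_singleton]
    refine hmem _ ?_
    have : π ((E1 - lam • E0) *ᵥ v) = B1 v - lam • B0 v := by
      rw [Matrix.sub_mulVec, Matrix.smul_mulVec, map_sub, _root_.map_smul, hB0app, hB1app]
    rw [Matrix.mulVecLin_apply, this, hall, sub_self]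
  obtain ⟨w, hwli, hw0, hw1⟩ := kernel_pair _ u1 u1 hker2
  have hmm : ((-lam) • E0 - (-1 : ℂ) • E1) = E1 - lam • E0 := by
    simp only [neg_smul, one_smul, sub_neg_eq_add]
    abel
  refine H (-1) (-lam) (Or.inl (by norm_num)) w hwli ⟨?_, ?_⟩
  · rw [hmm]; exact hw0
  · rw [hmm]; exact hw1

end Stmt19Aux

namespace Stmt19Aux

lemma lemmaC (E0 E1 : Matrix (Fin 4) (Fin 4) ℂ)
    (hker : ∀ v : V4, E0 *ᵥ v = 0 → E1 *ᵥ v = 0 → v = 0) :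
    ∃ (a b : ℂ) (v f : Fin 2 → V4), (a ≠ 0 ∨ b ≠ 0) ∧
      (∀ i j, f i ⬝ᵥ (E0 *ᵥ v j) = if i = j then a else 0) ∧
      (∀ i j, f i ⬝ᵥ (E1 *ᵥ v j) = if i = j then b else 0) := by
  by_cases hBI : ∃ a b : ℂ, (a ≠ 0 ∨ b ≠ 0) ∧ ∃ w : Fin 2 → V4,
      LinearIndependent ℂ w ∧ (b • E0 - a • E1) *ᵥ w 0 = 0 ∧ (b • E0 - a • E1) *ᵥ w 1 = 0
  · obtain ⟨a, b, hab, w, hw, h0, h1⟩ := hBI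
    obtain ⟨u0, hu00, hu01⟩ := parallel_images E0 E1 hab (w 0) h0
    obtain ⟨u1, hu10, hu11⟩ := parallel_images E0 E1 hab (w 1) h1
    set u : Fin 2 → V4 := ![u0, u1] with hu
    have huE0 : ∀ j, E0 *ᵥ w j = a • u j := by
      intro j; fin_cases j <;> simp [hu, hu00, hu10]
    have huE1 : ∀ j, E1 *ᵥ w j = b • u j := by
      intro j; fin_cases j <;> simp [hu, hu01, hu11]
    have hindep : LinearIndependent ℂ u := by
      rw [Fintype.linearIndependent_iff]
      intro g hg
      have hgsum : g 0 • u 0 + g 1 • u 1 = 0 := by rw [← Fin.sum_univ_two (f := fun i => g i • u i)]; exact hg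
      have hz0 : E0 *ᵥ (g 0 • w 0 + g 1 • w 1) = 0 := by
        rw [Matrix.mulVec_add, Matrix.mulVec_smul, Matrix.mulVec_smul, huE0 0, huE0 1]
        have e : g 0 • a • u 0 + g 1 • a • u 1 = a • (g 0 • u 0 + g 1 • u 1) := by
          rw [smul_add, smul_smul, smul_smul, smul_smul, smul_smul,
            mul_comm a (g 0), mul_comm a (g 1)]
        rw [e, hgsum, smul_zero]
      have hz1 : E1 *ᵥ (g 0 • w 0 + g 1 • w 1) = 0 := by
        rw [Matrix.mulVec_add, Matrix.mulVec_smul, Matrix.mulVec_smul, huE1 0, huE1 1]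
        have e : g 0 • b • u 0 + g 1 • b • u 1 = b • (g 0 • u 0 + g 1 • u 1) := by
          rw [smul_add, smul_smul, smul_smul, smul_smul, smul_smul,
            mul_comm b (g 0), mul_comm b (g 1)]
        rw [e, hgsum, smul_zero]
      have hz : g 0 • w 0 + g 1 • w 1 = 0 := hker _ hz0 hz1
      exact Fintype.linearIndependent_iff.mp hw g (by rw [Fin.sum_univ_two]; exact hz)
    obtain ⟨f0, hf0⟩ := exists_dual u hindep ![1, 0]
    obtain ⟨f1, hf1⟩ := exists_dual u hindep ![0, 1]
    have hA0 : f0 ⬝ᵥ u 0 = 1 := by simpa using hf0 0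
    have hA1 : f0 ⬝ᵥ u 1 = 0 := by simpa using hf0 1
    have hB0 : f1 ⬝ᵥ u 0 = 0 := by simpa using hf1 0
    have hB1 : f1 ⬝ᵥ u 1 = 1 := by simpa using hf1 1
    refine ⟨a, b, w, ![f0, f1], hab, ?_, ?_⟩
    · intro i j
      fin_cases i <;> fin_cases j <;>
        simp [huE0, dotProduct_smul, hA0, hA1, hB0, hB1]
    · intro i j
      fin_cases i <;> fin_cases j <;>
        simp [huE1, dotProduct_smul, hA0, hA1, hB0, hB1]
  · have H : ∀ a b : ℂ, (a ≠ 0 ∨ b ≠ 0) → ∀ w : Fin 2 → V4, LinearIndependent ℂ w →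
        ¬((b • E0 - a • E1) *ᵥ w 0 = 0 ∧ (b • E0 - a • E1) *ᵥ w 1 = 0) := by
      intro a b hab w hw hcontra
      exact hBI ⟨a, b, hab, w, hw, hcontra.1, hcontra.2⟩
    obtain ⟨a, b, hab, v1, hv1ne, hGv1⟩ := exists_singular_member E0 E1
    obtain ⟨u1, hu1E0, hu1E1⟩ := parallel_images E0 E1 hab v1 hGv1
    have hu1ne : u1 ≠ 0 := by
      intro h0
      exact hv1ne (hker v1 (by rw [hu1E0, h0, smul_zero]) (by rw [hu1E1, h0, smul_zero]))
    by_cases hIIa : ∃ v2 : V4, LinearIndependent ℂ ![u1, E0 *ᵥ v2, E1 *ᵥ v2]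
    · obtain ⟨v2, htri⟩ := hIIa
      obtain ⟨f0, hf0⟩ := exists_dual _ htri ![1, 0, 0]
      obtain ⟨f1, hf1⟩ := exists_dual _ htri ![0, a, b]
      have hA00 : f0 ⬝ᵥ u1 = 1 := by simpa using hf0 0
      have hA01 : f0 ⬝ᵥ (E0 *ᵥ v2) = 0 := by simpa using hf0 1
      have hA02 : f0 ⬝ᵥ (E1 *ᵥ v2) = 0 := by simpa using hf0 2
      have hB00 : f1 ⬝ᵥ u1 = 0 := by simpa using hf1 0
      have hB01 : f1 ⬝ᵥ (E0 *ᵥ v2) = a := by simpa using hf1 1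
      have hB02 : f1 ⬝ᵥ (E1 *ᵥ v2) = b := by simpa using hf1 2
      refine ⟨a, b, ![v1, v2], ![f0, f1], hab, ?_, ?_⟩
      · intro i j
        fin_cases i <;> fin_cases j <;>
          simp [hu1E0, hu1E1, dotProduct_smul, hA00, hA01, hA02, hB00, hB01, hB02]
      · intro i j
        fin_cases i <;> fin_cases j <;>
          simp [hu1E0, hu1E1, dotProduct_smul, hA00, hA01, hA02, hB00, hB01, hB02]
    · push_neg at hIIa
      exact absurd (branchIIb E0 E1 H u1 hu1ne hIIa) id

end Stmt19Aux

namespace Stmt19Aux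

lemma dot_star_self {k : ℕ} (y : Fin k → ℂ) :
    star y ⬝ᵥ y = ((∑ i, Complex.normSq (y i) : ℝ) : ℂ) := by
  rw [Complex.ofReal_sum]
  simp only [dotProduct, Pi.star_apply]
  refine Finset.sum_congr rfl fun i _ => ?_
  rw [Complex.normSq_eq_conj_mul_self, Complex.star_def]

lemma exists_scale {m n : ℕ} (M : Matrix (Fin m) (Fin n) ℂ) :
    ∃ t : ℝ, 0 < t ∧ (1 - ((t : ℝ) : ℂ) • (Mᴴ * M)).PosSemidef := by
  classical
  set c : ℝ := (∑ k, ∑ l, Complex.normSq (M k l)) + 1 with hc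
  have hsum_nonneg : 0 ≤ ∑ k, ∑ l, Complex.normSq (M k l) :=
    Finset.sum_nonneg fun k _ => Finset.sum_nonneg fun l _ => Complex.normSq_nonneg _
  have hcpos : 0 < c := by positivity
  refine ⟨c⁻¹, inv_pos.mpr hcpos, Matrix.posSemidef_iff_dotProduct_mulVec.mpr ⟨?_, ?_⟩⟩
  · -- Hermitian
    simp [Matrix.IsHermitian, Matrix.conjTranspose_sub, Matrix.conjTranspose_smul,
      Matrix.conjTranspose_mul, Matrix.conjTranspose_conjTranspose, Complex.star_def,
      Complex.conj_ofReal]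
  · -- PSD inequality
    intro x
    have hform : (1 - ((c⁻¹ : ℝ) : ℂ) • (Mᴴ * M)) *ᵥ x
        = x - ((c⁻¹ : ℝ) : ℂ) • ((Mᴴ * M) *ᵥ x) := by
      rw [Matrix.sub_mulVec, Matrix.one_mulVec, Matrix.smul_mulVec]
    have hdot : star x ⬝ᵥ ((Mᴴ * M) *ᵥ x) = star (M *ᵥ x) ⬝ᵥ (M *ᵥ x) := by
      rw [← Matrix.mulVec_mulVec, Matrix.dotProduct_mulVec, ← Matrix.star_mulVec]
    set Nx : ℝ := ∑ i, Complex.normSq (x i) with hNx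
    set Ny : ℝ := ∑ i, Complex.normSq ((M *ᵥ x) i) with hNy
    have hNxnn : 0 ≤ Nx := Finset.sum_nonneg fun i _ => Complex.normSq_nonneg _
    have hNynn : 0 ≤ Ny := Finset.sum_nonneg fun i _ => Complex.normSq_nonneg _
    have hineq : Ny ≤ (c - 1) * Nx := by
      have hrow : ∀ kk, Complex.normSq ((M *ᵥ x) kk) ≤ (∑ l, Complex.normSq (M kk l)) * Nx := by
        intro kk
        have h1 : ‖(M *ᵥ x) kk‖ ≤ ∑ l, ‖M kk l‖ * ‖x l‖ := by
          rw [Matrix.mulVec, dotProduct]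
          refine (norm_sum_le _ _).trans ?_
          refine le_of_eq (Finset.sum_congr rfl fun l _ => ?_)
          exact norm_mul _ _
        have h2 : (∑ l, ‖M kk l‖ * ‖x l‖) ^ 2
            ≤ (∑ l, ‖M kk l‖ ^ 2) * (∑ l, ‖x l‖ ^ 2) :=
          Finset.sum_mul_sq_le_sq_mul_sq _ _ _
        have h3 : Complex.normSq ((M *ᵥ x) kk) ≤ (∑ l, ‖M kk l‖ * ‖x l‖) ^ 2 := by
          rw [← Complex.sq_norm]
          exact pow_le_pow_left₀ (norm_nonneg _) h1 2
        refine h3.trans (h2.trans (le_of_eq ?_))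
        congr 1
        · exact Finset.sum_congr rfl fun l _ => Complex.sq_norm _
        · exact Finset.sum_congr rfl fun l _ => Complex.sq_norm _
      calc Ny ≤ ∑ kk, (∑ l, Complex.normSq (M kk l)) * Nx :=
            Finset.sum_le_sum fun kk _ => hrow kk
        _ = (∑ kk, ∑ l, Complex.normSq (M kk l)) * Nx := by rw [Finset.sum_mul]
        _ = (c - 1) * Nx := by rw [hc]; ring_nf
    have hmain : 0 ≤ Nx - c⁻¹ * Ny := by
      have h4 : c⁻¹ * Ny ≤ c⁻¹ * ((c - 1) * Nx) :=
        mul_le_mul_of_nonneg_left hineq (le_of_lt (inv_pos.mpr hcpos))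
      have h5 : c⁻¹ * ((c - 1) * Nx) ≤ Nx := by
        have hci : c * c⁻¹ = 1 := mul_inv_cancel₀ (ne_of_gt hcpos)
        nlinarith [inv_pos.mpr hcpos]
      linarith
    rw [hform, dotProduct_sub, dotProduct_smul, hdot, dot_star_self,
      dot_star_self, ← hNx, ← hNy]
    rw [smul_eq_mul, ← Complex.ofReal_mul, ← Complex.ofReal_sub]
    exact_mod_cast Complex.zero_le_real.mpr hmain

end Stmt19Aux

namespace Stmt19Aux

lemma subchannel_smul {nn mm : ℕ} (M : Matrix (Fin mm) (Fin nn) ℂ) (t : ℝ) (ht : 0 ≤ t)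
    (hpsd : (1 - ((t : ℝ) : ℂ) • (Mᴴ * M)).PosSemidef) :
    IsSubchannel (fun X : Matrix (Fin nn) (Fin nn) ℂ => ((t : ℝ) : ℂ) • (M * X * Mᴴ)) := by
  have hsq : ((Real.sqrt t : ℝ) : ℂ) * ((Real.sqrt t : ℝ) : ℂ) = ((t : ℝ) : ℂ) := by
    rw [← Complex.ofReal_mul, Real.mul_self_sqrt ht]
  have hstar : star ((Real.sqrt t : ℝ) : ℂ) = ((Real.sqrt t : ℝ) : ℂ) := by
    rw [Complex.star_def, Complex.conj_ofReal]
  refine ⟨1, fun _ => ((Real.sqrt t : ℝ) : ℂ) • M, fun X => ?_, ?_⟩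
  · rw [Fin.sum_univ_one, Matrix.conjTranspose_smul, hstar, Matrix.smul_mul, Matrix.smul_mul,
      Matrix.mul_smul, smul_smul, hsq]
  · rw [Fin.sum_univ_one, Matrix.conjTranspose_smul, hstar, Matrix.smul_mul,
      Matrix.mul_smul, smul_smul, hsq]
    exact hpsd

lemma mul3_entry {d : ℕ} (A : Matrix (Fin 2) (Fin d) ℂ) (B : Matrix (Fin d) (Fin d) ℂ)
    (V : Matrix (Fin d) (Fin 2) ℂ) (i : Fin 2) (j : Fin 2) :
    (A * B * V) i j = A i ⬝ᵥ (B *ᵥ (fun k => V k j)) := by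
  simp only [Matrix.mul_apply, Matrix.mulVec, dotProduct, Finset.sum_mul,
    Finset.mul_sum, mul_assoc]
  rw [Finset.sum_comm]

end Stmt19Aux

open Stmt19Aux in
/-- Proposition 7: every channel on `M_4` with (at most) two Kraus operators is
probabilistically correctable for `ℂ²`. -/
theorem stmt_19 (E0 E1 : Mat 4) (h : E0ᴴ * E0 + E1ᴴ * E1 = 1)
    (E : Mat 4 → Mat 4) (hE : ∀ X, E X = E0 * X * E0ᴴ + E1 * X * E1ᴴ) :
    ∃ (S : Mat 2 → Mat 4) (R : Mat 4 → Mat 2) (p : ℝ),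
      IsSubchannel S ∧ IsSubchannel R ∧ 0 < p ∧
      ∀ X : Mat 2, R (E (S X)) = (p : ℂ) • X := by
  have hker : ∀ v : V4, E0 *ᵥ v = 0 → E1 *ᵥ v = 0 → v = 0 := by
    intro v h0 h1
    have hv : (E0ᴴ * E0 + E1ᴴ * E1) *ᵥ v = v := by rw [h, Matrix.one_mulVec]
    rw [Matrix.add_mulVec, ← Matrix.mulVec_mulVec, ← Matrix.mulVec_mulVec, h0, h1,
      Matrix.mulVec_zero, Matrix.mulVec_zero, add_zero] at hv
    exact hv.symm
  obtain ⟨a, b, v, f, hab, hq0, hq1⟩ := lemmaC E0 E1 hker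
  set A : Matrix (Fin 2) (Fin 4) ℂ := Matrix.of f with hA
  set V : Matrix (Fin 4) (Fin 2) ℂ := Matrix.of (fun k j => v j k) with hV
  have hcol : ∀ j, (fun k => V k j) = v j := fun j => rfl
  have hAV0 : A * E0 * V = a • (1 : Mat 2) := by
    ext i j
    rw [mul3_entry, hcol]
    have hq := hq0 i j
    have : A i = f i := rfl
    rw [this, hq]
    simp [Matrix.one_apply]
  have hAV1 : A * E1 * V = b • (1 : Mat 2) := by
    ext i j
    rw [mul3_entry, hcol]
    have hq := hq1 i j
    have : A i = f i := rfl
    rw [this, hq]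
    simp [Matrix.one_apply]
  obtain ⟨tS, htS, hSpsd⟩ := exists_scale V
  obtain ⟨tR, htR, hRpsd⟩ := exists_scale A
  set S : Mat 2 → Mat 4 := fun X => ((tS : ℝ) : ℂ) • (V * X * Vᴴ) with hS
  set R : Mat 4 → Mat 2 := fun Y => ((tR : ℝ) : ℂ) • (A * Y * Aᴴ) with hR
  have hnorm : 0 < Complex.normSq a + Complex.normSq b := by
    rcases hab with ha | hb
    · exact add_pos_of_pos_of_nonneg (Complex.normSq_pos.mpr ha) (Complex.normSq_nonneg b)
    · exact add_pos_of_nonneg_of_pos (Complex.normSq_nonneg a) (Complex.normSq_pos.mpr hb)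
  refine ⟨S, R, tR * tS * (Complex.normSq a + Complex.normSq b),
    subchannel_smul V tS htS.le hSpsd, subchannel_smul A tR htR.le hRpsd,
    by positivity, ?_⟩
  intro X
  rw [hE]
  have hSX : S X = ((tS : ℝ) : ℂ) • (V * X * Vᴴ) := rfl
  have hRY : ∀ Y, R Y = ((tR : ℝ) : ℂ) • (A * Y * Aᴴ) := fun Y => rfl
  rw [hSX, hRY]
  have expand : A * (E0 * (((tS : ℝ) : ℂ) • (V * X * Vᴴ)) * E0ᴴ
      + E1 * (((tS : ℝ) : ℂ) • (V * X * Vᴴ)) * E1ᴴ) * Aᴴ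
      = ((tS : ℝ) : ℂ) • ((A * E0 * V) * X * (A * E0 * V)ᴴ
        + (A * E1 * V) * X * (A * E1 * V)ᴴ) := by
    simp only [Matrix.conjTranspose_mul, Matrix.mul_add, Matrix.add_mul, Matrix.mul_smul,
      Matrix.smul_mul, smul_add, Matrix.mul_assoc]
  rw [expand, hAV0, hAV1]
  have hsc : (a • (1 : Mat 2)) * X * (a • (1 : Mat 2))ᴴ = ((Complex.normSq a : ℝ) : ℂ) • X := by
    rw [Matrix.conjTranspose_smul, Matrix.conjTranspose_one, Matrix.smul_mul,
      Matrix.mul_smul, Matrix.one_mul, Matrix.mul_one, smul_smul]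
    congr 1
    rw [Complex.star_def, mul_comm, Complex.mul_conj]
  have hsc2 : (b • (1 : Mat 2)) * X * (b • (1 : Mat 2))ᴴ = ((Complex.normSq b : ℝ) : ℂ) • X := by
    rw [Matrix.conjTranspose_smul, Matrix.conjTranspose_one, Matrix.smul_mul,
      Matrix.mul_smul, Matrix.one_mul, Matrix.mul_one, smul_smul]
    congr 1
    rw [Complex.star_def, mul_comm, Complex.mul_conj]
  rw [hsc, hsc2, ← add_smul, smul_smul, smul_smul]
  congr 1
  push_cast
  ring
end
end
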